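/- arXiv:1211.6775 — 5 statements merged into one kernel-verified Lean document; each statement's English description precedes it below -/
import Mathlib

section
/- Let X be a finite uniform d-dimensional simplicial complex and 0 ≤ p < 1, and let A be the transition operator of the p-lazy (d−1)-walk on Ω^{d−1}. Then every eigenvalue μ of A satisfies 2p−1 ≤ μ ≤ (p(d−1)+1)/d, and A f = ((p(d−1)+1)/d)·f for every closed (d−1)-form f ∈ Z^{d−1}. -/
open scoped BigOperators Classical
open Filter Topology

noncomputable section

/-- A simplicial complex on a vertex set `V`: a family of finite subsets of `V`
(the cells) closed under taking nonempty subsets. -/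
structure SComplex (V : Type*) where
  cells : Set (Finset V)
  down_closed : ∀ ⦃s t : Finset V⦄, s ∈ cells → t ⊆ s → t.Nonempty → t ∈ cells

namespace SComplex

variable {V : Type*} (X : SComplex V)

/-- The tuple `σ` of `n` vertices spans an `(n-1)`-dimensional cell of `X`. -/
def IsCellT {n : ℕ} (σ : Fin n → V) : Prop :=
  Function.Injective σ ∧ Finset.image σ Finset.univ ∈ X.cells

/-- The degree of a cell `s`: the number of cells with one more vertex containing it. -/
def degS (s : Finset V) : ℕ :=
  Set.ncard {t : Finset V | t ∈ X.cells ∧ t.card = s.card + 1 ∧ s ⊆ t}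

/-- Degree of the cell spanned by a tuple. -/
def degT {n : ℕ} (σ : Fin n → V) : ℕ :=
  X.degS (Finset.image σ Finset.univ)

/-- An `(n-1)`-form: an alternating function on oriented `(n-1)`-cells, encoded as a
function on `n`-tuples of vertices which vanishes off the cells of `X` and is
antisymmetric under permutations. -/
def IsForm (n : ℕ) (f : (Fin n → V) → ℝ) : Prop :=
  (∀ σ, ¬ X.IsCellT σ → f σ = 0) ∧
  ∀ (σ : Fin n → V) (π : Equiv.Perm (Fin n)),
    f (σ ∘ π) = ((Equiv.Perm.sign π : ℤ) : ℝ) * f σ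

/-- The Dirac form `𝟙_{σ₀}`: 1 at `σ₀`, -1 at the reversed orientation, 0 elsewhere. -/
def dirac {n : ℕ} (σ₀ : Fin n → V) : (Fin n → V) → ℝ := fun σ =>
  if ∃ π : Equiv.Perm (Fin n), Equiv.Perm.sign π = 1 ∧ σ = σ₀ ∘ π then 1
  else if ∃ π : Equiv.Perm (Fin n), Equiv.Perm.sign π = -1 ∧ σ = σ₀ ∘ π then -1
  else 0

/-- The boundary operator: `(∂f)(σ) = Σ_{v : vσ ∈ X} f(vσ)`. -/
def bdry {n : ℕ} (f : (Fin (n + 1) → V) → ℝ) : (Fin n → V) → ℝ := fun σ =>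
  ∑ᶠ v ∈ {v : V | X.IsCellT (Fin.cons v σ)}, f (Fin.cons v σ)

/-- The weighted sum of `f` over the neighbours of `σ`:
`Σ_{σ' ∼ σ} f(σ')/deg σ' = Σ_{v ◁ σ} Σ_i (-1)^i f(v(σ∖σ_i))/deg(v(σ∖σ_i))`. -/
def nbrW {n : ℕ} (f : (Fin (n + 1) → V) → ℝ) : (Fin (n + 1) → V) → ℝ := fun σ =>
  ∑ᶠ v ∈ {v : V | X.IsCellT (Fin.cons v σ)},
    ∑ i : Fin (n + 1),
      (-1 : ℝ) ^ (i : ℕ) * f (Fin.cons v (σ ∘ i.succAbove)) /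
        (X.degT (Fin.cons v (σ ∘ i.succAbove)) : ℝ)

/-- The unweighted sum of `f` over the neighbours of `σ`: `Σ_{σ' ∼ σ} f(σ')`. -/
def nbrU {n : ℕ} (f : (Fin (n + 1) → V) → ℝ) : (Fin (n + 1) → V) → ℝ := fun σ =>
  ∑ᶠ v ∈ {v : V | X.IsCellT (Fin.cons v σ)},
    ∑ i : Fin (n + 1), (-1 : ℝ) ^ (i : ℕ) * f (Fin.cons v (σ ∘ i.succAbove))

/-- The upper Laplacian `(Δ⁺f)(σ) = f(σ) - Σ_{σ'∼σ} f(σ')/deg σ'`. -/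
def lapUp {n : ℕ} (f : (Fin (n + 1) → V) → ℝ) : (Fin (n + 1) → V) → ℝ := fun σ =>
  f σ - X.nbrW f σ

/-- The transition operator of the `p`-lazy walk:
`(Af)(σ) = p f(σ) + ((1-p)/d) Σ_{σ'∼σ} f(σ')/deg σ'`, where `d = n+1`. -/
def transOp {n : ℕ} (p : ℝ) (f : (Fin (n + 1) → V) → ℝ) : (Fin (n + 1) → V) → ℝ := fun σ =>
  p * f σ + ((1 - p) / ((n : ℝ) + 1)) * X.nbrW f σ

/-- The normalized expectation process `Ẽ_nn = (d/(p(d-1)+1))^nn • A^nn 𝟙_{σ₀}`. -/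
def nexp {n : ℕ} (p : ℝ) (σ₀ : Fin (n + 1) → V) (nn : ℕ) : (Fin (n + 1) → V) → ℝ :=
  (((n : ℝ) + 1) / (p * (n : ℝ) + 1)) ^ nn • (X.transOp p)^[nn] (SComplex.dirac σ₀)

/-- The weighted inner product `⟨f,g⟩ = Σ_{σ ∈ X^{n-1}} f(σ)g(σ)/deg σ`
(each unoriented cell is represented by `n!` tuples). -/
def innerW [Fintype V] {n : ℕ} (f g : (Fin n → V) → ℝ) : ℝ :=
  (1 / (n.factorial : ℝ)) * ∑ σ : Fin n → V, f σ * g σ / (X.degT σ : ℝ)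

/-- The unweighted inner product `⟨f,g⟩ = Σ_{σ ∈ X^{n-1}} f(σ)g(σ)`. -/
def innerU [Fintype V] {n : ℕ} (f g : (Fin n → V) → ℝ) : ℝ :=
  (1 / (n.factorial : ℝ)) * ∑ σ : Fin n → V, f σ * g σ

/-- The norm induced by the weighted inner product. -/
def normW [Fintype V] {n : ℕ} (f : (Fin n → V) → ℝ) : ℝ :=
  Real.sqrt (X.innerW f f)

/-- `f` is a closed `(d-1)`-form (`f ∈ Z^{d-1} = ker ∂_d^*`), characterized by
orthogonality to the image of `∂_d`. -/
def IsClosedForm [Fintype V] (m : ℕ) (f : (Fin (m + 2) → V) → ℝ) : Prop :=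
  X.IsForm (m + 2) f ∧
  ∀ g : (Fin (m + 3) → V) → ℝ, X.IsForm (m + 3) g → X.innerW f (X.bdry g) = 0

/-- `f` is an exact `(d-1)`-form (`f ∈ B^{d-1} = im ∂_{d-1}^*`): `f = ∂_{d-1}^* g` for a
`(d-2)`-form `g`, characterized by the adjoint identity. -/
def IsExactForm [Fintype V] (m : ℕ) (f : (Fin (m + 2) → V) → ℝ) : Prop :=
  X.IsForm (m + 2) f ∧
  ∃ g : (Fin (m + 1) → V) → ℝ, X.IsForm (m + 1) g ∧
    ∀ h : (Fin (m + 2) → V) → ℝ, X.IsForm (m + 2) h →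
      X.innerW f h = innerU g (X.bdry h)

/-- Two tuples span the same oriented cell. -/
def SameOr {n : ℕ} (σ σ' : Fin n → V) : Prop :=
  ∃ π : Equiv.Perm (Fin n), Equiv.Perm.sign π = 1 ∧ σ' = σ ∘ π

/-- The neighbour relation on oriented `(d-1)`-cells: `σ ∼ σ'` iff there is an oriented
`d`-cell of which both `σ` and the reversal of `σ'` are faces with the induced
orientation; equivalently `σ' = (-1)^i v(σ∖σ_i)` for some `v ◁ σ`. -/
def Nbr {n : ℕ} (σ σ' : Fin (n + 1) → V) : Prop :=
  ∃ (v : V) (i : Fin (n + 1)), X.IsCellT (Fin.cons v σ) ∧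
    (if Even (i : ℕ) then SameOr σ' (Fin.cons v (σ ∘ i.succAbove))
     else SameOr σ' (Fin.cons v (σ ∘ i.succAbove) ∘ Equiv.swap 0 1))

/-- `σ` is a face of the oriented cell `τ` with the orientation induced by `τ`. -/
def IsInducedFace {n : ℕ} (σ : Fin (n + 1) → V) (τ : Fin (n + 2) → V) : Prop :=
  ∃ i : Fin (n + 2), if Even (i : ℕ) then SameOr σ (τ ∘ i.succAbove)
    else SameOr σ (τ ∘ i.succAbove ∘ Equiv.swap 0 1)

/-- The family `𝒯` of `d`-cells (`d = m+2`) admits a disorientation: a choice of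
orientation for each cell of `𝒯` such that any two of them sharing a
codimension-one face induce the same orientation on it. -/
def HasDisorientation (m : ℕ) (𝒯 : Set (Finset V)) : Prop :=
  ∃ c : Finset V → (Fin (m + 3) → V),
    (∀ t ∈ 𝒯, Function.Injective (c t) ∧ Finset.image (c t) Finset.univ = t) ∧
    ∀ t ∈ 𝒯, ∀ t' ∈ 𝒯, t ≠ t' → (t ∩ t').card = m + 2 →
      ∃ σ : Fin (m + 2) → V, Function.Injective σ ∧
        Finset.image σ Finset.univ = t ∩ t' ∧
        IsInducedFace σ (c t) ∧ IsInducedFace σ (c t')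

/-- `X` (of dimension `d`) has no simple `d`-loops: no non-backtracking closed chain
of `d`-cells in which consecutive cells share a `(d-1)`-cell. -/
def NoSimpleLoops (d : ℕ) : Prop :=
  ∀ (n : ℕ) (τ : ℕ → Finset V), 2 ≤ n → (∀ i, τ (i + n) = τ i) →
    (∀ i, τ i ∈ X.cells ∧ (τ i).card = d + 1) →
    (∀ i, (τ i ∩ τ (i + 1)) ∈ X.cells ∧ (τ i ∩ τ (i + 1)).card = d) →
    (∀ i, τ i ≠ τ (i + 2)) → False

end SComplex

open SComplex

namespace Stmt6Aux

open Equiv Equiv.Perm SComplex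

set_option linter.unusedSectionVars false

variable {V : Type*} [Fintype V] (X : SComplex V)

lemma image_comp_perm {n : ℕ} (σ : Fin n → V) (π : Equiv.Perm (Fin n)) :
    Finset.image (σ ∘ π) Finset.univ = Finset.image σ Finset.univ := by
  ext x
  simp only [Finset.mem_image, Finset.mem_univ, true_and, Function.comp_apply]
  constructor
  · rintro ⟨i, rfl⟩; exact ⟨π i, rfl⟩
  · rintro ⟨i, rfl⟩; exact ⟨π.symm i, by simp⟩

lemma isCellT_comp_perm {n : ℕ} (σ : Fin n → V) (π : Equiv.Perm (Fin n)) :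
    X.IsCellT (σ ∘ π) ↔ X.IsCellT σ := by
  unfold SComplex.IsCellT
  rw [image_comp_perm]
  constructor
  · rintro ⟨h1, h2⟩
    refine ⟨?_, h2⟩
    have : Function.Injective ((σ ∘ π) ∘ π.symm) := h1.comp π.symm.injective
    simpa [Function.comp_def] using this
  · rintro ⟨h1, h2⟩
    exact ⟨h1.comp π.injective, h2⟩

lemma degT_comp_perm {n : ℕ} (σ : Fin n → V) (π : Equiv.Perm (Fin n)) :
    X.degT (σ ∘ π) = X.degT σ := by
  unfold SComplex.degT
  rw [image_comp_perm]

/-- The finset of vertices `v` such that `vσ` is a cell. -/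
def nbrF {n : ℕ} (σ : Fin n → V) : Finset V :=
  Finset.univ.filter fun v => X.IsCellT (Fin.cons v σ)

lemma finsum_nbr {n : ℕ} (σ : Fin n → V) (F : V → ℝ) :
    ∑ᶠ v ∈ {v : V | X.IsCellT (Fin.cons v σ)}, F v = ∑ v ∈ nbrF X σ, F v := by
  rw [← finsum_mem_coe_finset]
  congr 1
  ext v
  simp [nbrF]

lemma image_cons {n : ℕ} (v : V) (σ : Fin n → V) :
    Finset.image (Fin.cons v σ : Fin (n+1) → V) Finset.univ
      = insert v (Finset.image σ Finset.univ) := by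
  ext x
  simp only [Finset.mem_image, Finset.mem_univ, true_and, Finset.mem_insert]
  constructor
  · rintro ⟨i, rfl⟩
    cases i using Fin.cases with
    | zero => left; simp
    | succ j => right; exact ⟨j, by simp⟩
  · rintro (rfl | ⟨j, rfl⟩)
    · exact ⟨0, by simp⟩
    · exact ⟨j.succ, by simp⟩

lemma isCellT_of_cons {n : ℕ} {v : V} {σ : Fin (n+1) → V}
    (h : X.IsCellT (Fin.cons v σ)) : X.IsCellT σ := by
  obtain ⟨h1, h2⟩ := h
  rw [Fin.cons_injective_iff] at h1
  refine ⟨h1.2, ?_⟩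
  refine X.down_closed h2 ?_ ?_
  · rw [image_cons]; exact Finset.subset_insert _ _
  · exact ⟨σ 0, Finset.mem_image.2 ⟨0, Finset.mem_univ _, rfl⟩⟩

lemma card_nbrF {n : ℕ} (σ : Fin n → V) (hσ : Function.Injective σ) :
    (nbrF X σ).card = X.degT σ := by
  classical
  set s := Finset.image σ Finset.univ with hs
  have hrange : ∀ x, x ∈ s ↔ x ∈ Set.range σ := by
    intro x; simp [hs, Set.mem_range]
  have hmem : ∀ v, v ∈ nbrF X σ ↔ (v ∉ Set.range σ ∧ insert v s ∈ X.cells) := by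
    intro v
    simp only [nbrF, Finset.mem_filter, Finset.mem_univ, true_and]
    unfold SComplex.IsCellT
    rw [Fin.cons_injective_iff, image_cons]
    tauto
  have himg : {t : Finset V | t ∈ X.cells ∧ t.card = s.card + 1 ∧ s ⊆ t}
      = ↑((nbrF X σ).image fun v => insert v s) := by
    ext t
    simp only [Set.mem_setOf_eq, Finset.coe_image, Set.mem_image, Finset.mem_coe]
    constructor
    · rintro ⟨ht1, ht2, ht3⟩
      have hcard : (t \ s).card = 1 := by
        rw [Finset.card_sdiff_of_subset ht3]; omega
      obtain ⟨v, hv⟩ := Finset.card_eq_one.1 hcard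
      have hvt : v ∈ t ∧ v ∉ s := by
        have : v ∈ t \ s := hv ▸ Finset.mem_singleton_self v
        exact ⟨(Finset.mem_sdiff.1 this).1, (Finset.mem_sdiff.1 this).2⟩
      have htins : t = insert v s := by
        apply Finset.Subset.antisymm
        · intro x hx
          by_cases hxs : x ∈ s
          · exact Finset.mem_insert_of_mem hxs
          · have : x ∈ t \ s := Finset.mem_sdiff.2 ⟨hx, hxs⟩
            rw [hv, Finset.mem_singleton] at this
            exact this ▸ Finset.mem_insert_self _ _
        · exact Finset.insert_subset hvt.1 ht3
      refine ⟨v, ?_, htins.symm⟩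
      rw [hmem]
      refine ⟨fun hr => hvt.2 ((hrange v).2 hr), htins ▸ ht1⟩
    · rintro ⟨v, hv, rfl⟩
      rw [hmem] at hv
      have hvs : v ∉ s := fun h => hv.1 ((hrange v).1 h)
      exact ⟨hv.2, by rw [Finset.card_insert_of_notMem hvs], Finset.subset_insert _ _⟩
  have hinj : Set.InjOn (fun v => insert v s) ↑(nbrF X σ) := by
    intro v hv w hw hvw
    simp only [Finset.mem_coe, hmem] at hv hw
    have hvs : v ∉ s := fun h => hv.1 ((hrange v).1 h)
    have hws : w ∉ s := fun h => hw.1 ((hrange w).1 h)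
    have : v ∈ insert w s := by
      have h' : insert v s = insert w s := hvw
      rw [← h']; exact Finset.mem_insert_self _ _
    rcases Finset.mem_insert.1 this with h | h
    · exact h
    · exact absurd h hvs
  unfold SComplex.degT SComplex.degS
  rw [← hs, himg, Set.ncard_coe_finset, Finset.card_image_of_injOn hinj]

end Stmt6Aux

namespace Stmt6Aux

section Perms

variable {n : ℕ}

/-- Extend a permutation of `Fin n` to `Fin (n+1)` fixing `0`. -/
def ext0 (e : Equiv.Perm (Fin n)) : Equiv.Perm (Fin (n+1)) :=
  Equiv.Perm.decomposeFin.symm (0, e)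

lemma ext0_zero (e : Equiv.Perm (Fin n)) : ext0 e 0 = 0 :=
  Equiv.Perm.decomposeFin_symm_apply_zero 0 e

lemma ext0_succ (e : Equiv.Perm (Fin n)) (j : Fin n) : ext0 e j.succ = (e j).succ := by
  simp [ext0, Equiv.Perm.decomposeFin_symm_apply_succ]

lemma ext0_comp_succ (e : Equiv.Perm (Fin n)) :
    (ext0 e : Fin (n+1) → Fin (n+1)) ∘ Fin.succ = Fin.succ ∘ e := by
  funext j; simp [ext0_succ]

lemma sign_ext0 (e : Equiv.Perm (Fin n)) :
    Equiv.Perm.sign (ext0 e) = Equiv.Perm.sign e := by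
  simp [ext0, Equiv.Perm.decomposeFin.symm_sign]

lemma ext0_injective : Function.Injective (ext0 (n := n)) := by
  intro e f h
  have := Equiv.Perm.decomposeFin.symm.injective (a₁ := (0, e)) (a₂ := (0, f)) h
  exact (Prod.mk.injEq _ _ _ _ ▸ this).2

/-- The inverse of `Fin.cycleRange i`, sending `0` to `i` and `j.succ` to `i.succAbove j`. -/
def cyc (i : Fin (n+1)) : Equiv.Perm (Fin (n+1)) := (Fin.cycleRange i)⁻¹

lemma cyc_zero (i : Fin (n+1)) : cyc i 0 = i := by
  have h := Fin.cycleRange_self i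
  rw [cyc, ← h]; exact Equiv.symm_apply_apply _ _

lemma cyc_succ (i : Fin (n+1)) (j : Fin n) : cyc i j.succ = i.succAbove j := by
  have h := Fin.cycleRange_succAbove i j
  rw [cyc, ← h]; exact Equiv.symm_apply_apply _ _

lemma cyc_comp_succ (i : Fin (n+1)) :
    (cyc i : Fin (n+1) → Fin (n+1)) ∘ Fin.succ = i.succAbove := by
  funext j; simp [cyc_succ]

lemma sign_cyc (i : Fin (n+1)) :
    ((Equiv.Perm.sign (cyc i) : ℤ) : ℝ) = (-1 : ℝ) ^ (i : ℕ) := by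
  have : Equiv.Perm.sign (cyc i) = (-1) ^ (i : ℕ) := by
    rw [cyc, map_inv, Fin.sign_cycleRange]; simp
  rw [this]; push_cast; ring

/-- The coset decomposition map `(i, e) ↦ cyc i * ext0 e`. -/
def cosetMap : Fin (n+1) × Equiv.Perm (Fin n) → Equiv.Perm (Fin (n+1)) :=
  fun q => cyc q.1 * ext0 q.2

lemma cosetMap_bijective : Function.Bijective (cosetMap (n := n)) := by
  rw [Fintype.bijective_iff_injective_and_card]
  constructor
  · rintro ⟨i, e⟩ ⟨j, f⟩ h
    have h0 : i = j := by
      have := congrArg (fun π => π 0) h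
      simpa [cosetMap, Equiv.Perm.mul_apply, ext0_zero, cyc_zero] using this
    subst h0
    have h2 : ext0 e = ext0 f := mul_left_cancel h
    rw [ext0_injective h2]
  · simp [Fintype.card_perm, Fintype.card_fin, Nat.factorial_succ, mul_comm]

/-- Coset summation: a sum over the full symmetric group of an equivariant function
equals `n!` times the sum over the coset representatives `cyc i`. -/
lemma sum_perm_eq_coset {α : Type*} (h : (Fin (n+1) → α) → ℝ)
    (hequiv : ∀ (ρ : Fin (n+1) → α) (e : Equiv.Perm (Fin n)),
      h (ρ ∘ ext0 e) = ((Equiv.Perm.sign e : ℤ) : ℝ) * h ρ)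
    (τ : Fin (n+1) → α) :
    ∑ π : Equiv.Perm (Fin (n+1)), ((Equiv.Perm.sign π : ℤ) : ℝ) * h (τ ∘ π)
      = (n.factorial : ℝ) * ∑ i : Fin (n+1), (-1 : ℝ) ^ (i : ℕ) * h (τ ∘ cyc i) := by
  rw [← Fintype.sum_bijective cosetMap cosetMap_bijective
      (fun q => ((Equiv.Perm.sign (cosetMap q) : ℤ) : ℝ) * h (τ ∘ cosetMap q))
      (fun π => ((Equiv.Perm.sign π : ℤ) : ℝ) * h (τ ∘ π)) (fun q => rfl)]
  rw [Fintype.sum_prod_type, Finset.mul_sum]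
  apply Finset.sum_congr rfl
  intro i _
  have hterm : ∀ e : Equiv.Perm (Fin n),
      ((Equiv.Perm.sign (cosetMap (i, e)) : ℤ) : ℝ) * h (τ ∘ cosetMap (i, e))
        = (-1 : ℝ) ^ (i : ℕ) * h (τ ∘ cyc i) := by
    intro e
    have hc : (τ ∘ (cosetMap (i, e) : Fin (n+1) → Fin (n+1))) = (τ ∘ cyc i) ∘ ext0 e := by
      show τ ∘ ((cyc i * ext0 e : Equiv.Perm (Fin (n+1))) : Fin (n+1) → Fin (n+1)) = _
      rw [Equiv.Perm.coe_mul]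
      rfl
    have hsgn : ((Equiv.Perm.sign (cosetMap (i, e)) : ℤ) : ℝ)
        = (-1 : ℝ) ^ (i : ℕ) * ((Equiv.Perm.sign e : ℤ) : ℝ) := by
      show ((Equiv.Perm.sign (cyc i * ext0 e) : ℤ) : ℝ) = _
      rw [map_mul, sign_ext0]
      push_cast
      rw [sign_cyc]
    rw [hc, hequiv, hsgn]
    rcases Int.units_eq_one_or (Equiv.Perm.sign e) with hse | hse <;>
      rw [hse] <;> push_cast <;> ring
  rw [Finset.sum_congr rfl fun e _ => hterm e, Finset.sum_const, Finset.card_univ,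
    Fintype.card_perm, Fintype.card_fin, nsmul_eq_mul]

end Perms

end Stmt6Aux

namespace Stmt6Aux

open Equiv Equiv.Perm SComplex

set_option linter.unusedSectionVars false

variable {V : Type*} [Fintype V] (X : SComplex V)

lemma sum_comp_perm {k : ℕ} (π : Equiv.Perm (Fin k)) (F : (Fin k → V) → ℝ) :
    ∑ τ : Fin k → V, F (τ ∘ π) = ∑ τ : Fin k → V, F τ := by
  apply Fintype.sum_bijective (fun τ : Fin k → V => τ ∘ π) ?_ _ _ (fun τ => rfl)
  constructor
  · intro a b hab
    funext x
    have := congrFun hab (π.symm x)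
    simpa using this
  · intro τ
    exact ⟨τ ∘ π.symm, by funext x; simp⟩

/-- Indicator of the cells. -/
def χ {k : ℕ} (τ : Fin k → V) : ℝ := if X.IsCellT τ then 1 else 0

lemma χ_comp_perm {k : ℕ} (τ : Fin k → V) (π : Equiv.Perm (Fin k)) :
    χ X (τ ∘ π) = χ X τ := by
  unfold χ
  rw [if_congr (isCellT_comp_perm X τ π) rfl rfl]

lemma χ_nonneg {k : ℕ} (τ : Fin k → V) : 0 ≤ χ X τ := by
  unfold χ; positivity

section Forms

variable {n : ℕ} (f : (Fin (n+1) → V) → ℝ)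

/-- `h(τ) = f(τ∖τ₀)/deg(τ∖τ₀)`. -/
def hh : (Fin (n+2) → V) → ℝ := fun ρ =>
  f (ρ ∘ Fin.succ) / (X.degT (ρ ∘ Fin.succ) : ℝ)

/-- `G(τ) = Σ_i (-1)^i f(τ∖τ_i)/deg(τ∖τ_i)`, the unrestricted adjoint coboundary. -/
def GG : (Fin (n+2) → V) → ℝ := fun τ =>
  ∑ i : Fin (n+2), (-1 : ℝ) ^ (i : ℕ) * hh X f (τ ∘ cyc i)

/-- The adjoint coboundary `∂* f`, restricted to cells. -/
def Dst : (Fin (n+2) → V) → ℝ := fun τ => χ X τ * GG X f τ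

variable {f}

lemma hh_equivariant (hf : X.IsForm (n+1) f) (ρ : Fin (n+2) → V)
    (e : Equiv.Perm (Fin (n+1))) :
    hh X f (ρ ∘ ext0 e) = ((Equiv.Perm.sign e : ℤ) : ℝ) * hh X f ρ := by
  unfold hh
  have hcomp : (ρ ∘ ext0 e) ∘ Fin.succ = (ρ ∘ Fin.succ) ∘ e := by
    rw [Function.comp_assoc, ext0_comp_succ, ← Function.comp_assoc]
  rw [hcomp, hf.2 (ρ ∘ Fin.succ) e, degT_comp_perm, mul_div_assoc]

lemma GG_eq_perm_sum (hf : X.IsForm (n+1) f) (τ : Fin (n+2) → V) :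
    ((n+1).factorial : ℝ) * GG X f τ
      = ∑ π : Equiv.Perm (Fin (n+2)), ((Equiv.Perm.sign π : ℤ) : ℝ) * hh X f (τ ∘ π) := by
  rw [sum_perm_eq_coset (hh X f) (hh_equivariant X hf) τ, GG]

lemma GG_comp_perm (hf : X.IsForm (n+1) f) (τ : Fin (n+2) → V)
    (π : Equiv.Perm (Fin (n+2))) :
    GG X f (τ ∘ π) = ((Equiv.Perm.sign π : ℤ) : ℝ) * GG X f τ := by
  have hfac : ((n+1).factorial : ℝ) ≠ 0 := Nat.cast_ne_zero.2 (Nat.factorial_ne_zero _)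
  have key : ((n+1).factorial : ℝ) * GG X f (τ ∘ π)
      = ((Equiv.Perm.sign π : ℤ) : ℝ) * (((n+1).factorial : ℝ) * GG X f τ) := by
    rw [GG_eq_perm_sum X hf, GG_eq_perm_sum X hf, Finset.mul_sum]
    have hb : ∀ ρ : Equiv.Perm (Fin (n+2)),
        ((Equiv.Perm.sign π : ℤ) : ℝ) * (((Equiv.Perm.sign ρ : ℤ) : ℝ) * hh X f (τ ∘ ρ))
          = (fun ρ' => ((Equiv.Perm.sign ρ' : ℤ) : ℝ) * hh X f ((τ ∘ π) ∘ ρ'))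
              (π⁻¹ * ρ) := by
      intro ρ
      simp only
      have h1 : (τ ∘ π) ∘ (π⁻¹ * ρ : Equiv.Perm (Fin (n+2))) = τ ∘ ρ := by
        rw [Equiv.Perm.coe_mul]
        funext x
        simp
      rw [h1, map_mul]
      have h2 : ((Equiv.Perm.sign π⁻¹ * Equiv.Perm.sign ρ : ℤˣ) : ℤ)
          = (Equiv.Perm.sign π⁻¹ : ℤ) * (Equiv.Perm.sign ρ : ℤ) := rfl
      rw [h2, map_inv]
      push_cast
      rcases Int.units_eq_one_or (Equiv.Perm.sign π) with hs | hs <;> rw [hs] <;> norm_num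
    rw [Finset.sum_congr rfl fun ρ _ => hb ρ]
    exact (Fintype.sum_bijective (fun ρ => π⁻¹ * ρ)
      (Group.mulLeft_bijective π⁻¹) _ _ (fun ρ => rfl)).symm
  have key2 : ((n+1).factorial : ℝ) * GG X f (τ ∘ π)
      = ((n+1).factorial : ℝ) * (((Equiv.Perm.sign π : ℤ) : ℝ) * GG X f τ) := by
    rw [key]; ring
  exact mul_left_cancel₀ hfac key2

lemma Dst_isForm (hf : X.IsForm (n+1) f) : X.IsForm (n+2) (Dst X f) := by
  constructor
  · intro τ hτ
    unfold Dst χ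
    rw [if_neg hτ, zero_mul]
  · intro τ π
    unfold Dst
    rw [χ_comp_perm, GG_comp_perm X hf]
    ring

end Forms

end Stmt6Aux

namespace Stmt6Aux

open Equiv Equiv.Perm SComplex

set_option linter.unusedSectionVars false

variable {V : Type*} [Fintype V] (X : SComplex V)

section Forms2

variable {n : ℕ} {f : (Fin (n+1) → V) → ℝ}

lemma comp_cyc (τ : Fin (n+2) → V) (i : Fin (n+2)) :
    (τ ∘ cyc i) ∘ Fin.succ = τ ∘ i.succAbove := by
  rw [Function.comp_assoc, cyc_comp_succ]

lemma GG_eq (f : (Fin (n+1) → V) → ℝ) (τ : Fin (n+2) → V) :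
    GG X f τ = ∑ i : Fin (n+2),
      (-1 : ℝ) ^ (i : ℕ) * (f (τ ∘ i.succAbove) / (X.degT (τ ∘ i.succAbove) : ℝ)) := by
  unfold GG hh
  exact Finset.sum_congr rfl fun i _ => by rw [comp_cyc]

lemma cons_comp_succ (v : V) (σ : Fin (n+1) → V) :
    (Fin.cons v σ : Fin (n+2) → V) ∘ Fin.succ = σ := by
  funext j; simp

lemma cons_comp_succAbove_succ (v : V) (σ : Fin (n+1) → V) (j : Fin (n+1)) :
    (Fin.cons v σ : Fin (n+2) → V) ∘ (j.succ).succAbove = Fin.cons v (σ ∘ j.succAbove) := by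
  funext k
  cases k using Fin.cases with
  | zero => simp
  | succ l => simp [Fin.succ_succAbove_succ]

/-- The key pointwise identity : `∂(∂* f) = f - nbrW f`. -/
lemma bdry_Dst (hf : X.IsForm (n+1) f)
    (hdeg : ∀ σ : Fin (n+1) → V, X.IsCellT σ → 0 < X.degT σ) (σ : Fin (n+1) → V) :
    X.bdry (Dst X f) σ = f σ - X.nbrW f σ := by
  have hW : X.nbrW f σ = ∑ v ∈ nbrF X σ, ∑ i : Fin (n+1),
      (-1 : ℝ) ^ (i : ℕ) * f (Fin.cons v (σ ∘ i.succAbove)) /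
        (X.degT (Fin.cons v (σ ∘ i.succAbove)) : ℝ) := by
    unfold SComplex.nbrW
    exact finsum_nbr X σ _
  have hB : X.bdry (Dst X f) σ = ∑ v ∈ nbrF X σ, Dst X f (Fin.cons v σ) := by
    unfold SComplex.bdry
    exact finsum_nbr X σ _
  have hterm : ∀ v ∈ nbrF X σ, Dst X f (Fin.cons v σ)
      = f σ / (X.degT σ : ℝ) - ∑ i : Fin (n+1),
          (-1 : ℝ) ^ (i : ℕ) * f (Fin.cons v (σ ∘ i.succAbove)) /
            (X.degT (Fin.cons v (σ ∘ i.succAbove)) : ℝ) := by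
    intro v hv
    have hcell : X.IsCellT (Fin.cons v σ) := by
      simpa [nbrF] using hv
    have hχ : χ X (Fin.cons v σ) = 1 := by unfold χ; rw [if_pos hcell]
    unfold Dst
    rw [hχ, one_mul, GG_eq X f]
    rw [Fin.sum_univ_succ]
    have h0 : (Fin.cons v σ : Fin (n+2) → V) ∘ (0 : Fin (n+2)).succAbove = σ := by
      rw [Fin.succAbove_zero, cons_comp_succ]
    rw [h0]
    simp only [Fin.val_zero, pow_zero, one_mul]
    congr 1
    rw [← Finset.sum_neg_distrib]
    apply Finset.sum_congr rfl
    intro j _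
    rw [cons_comp_succAbove_succ]
    rw [Fin.val_succ, pow_succ]
    ring
  rw [hB, Finset.sum_congr rfl hterm, Finset.sum_sub_distrib, hW]
  congr 1
  rw [Finset.sum_const]
  by_cases hcell : X.IsCellT σ
  · rw [card_nbrF X σ hcell.1, nsmul_eq_mul]
    have hd : (0 : ℝ) < (X.degT σ : ℝ) := by exact_mod_cast hdeg σ hcell
    field_simp
  · have hf0 : f σ = 0 := hf.1 σ hcell
    have hempty : nbrF X σ = ∅ := by
      rw [Finset.eq_empty_iff_forall_notMem]
      intro v hv
      exact hcell (isCellT_of_cons X (by simpa [nbrF] using hv))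
    rw [hempty, hf0]
    simp

end Forms2

end Stmt6Aux

namespace Stmt6Aux

open Equiv Equiv.Perm SComplex

set_option linter.unusedSectionVars false

variable {V : Type*} [Fintype V] (X : SComplex V)

section Inner

variable {n : ℕ}

lemma neg_one_pow_sq (k : ℕ) : ((-1 : ℝ) ^ k) ^ 2 = 1 := by
  rw [← pow_mul, mul_comm k 2, pow_mul]
  norm_num

lemma comp_cycleRange_cyc (τ : Fin (n+2) → V) (i : Fin (n+2)) :
    (τ ∘ Fin.cycleRange i) ∘ cyc i = τ := by
  funext x
  simp [cyc]

lemma GG_comp_cycleRange {f : (Fin (n+1) → V) → ℝ} (hf : X.IsForm (n+1) f)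
    (τ : Fin (n+2) → V) (i : Fin (n+2)) :
    GG X f (τ ∘ Fin.cycleRange i) = (-1 : ℝ) ^ (i : ℕ) * GG X f τ := by
  rw [GG_comp_perm X hf τ (Fin.cycleRange i), Fin.sign_cycleRange]
  push_cast
  ring

lemma cons_bijective :
    Function.Bijective (fun q : V × (Fin (n+1) → V) => (Fin.cons q.1 q.2 : Fin (n+2) → V)) := by
  constructor
  · rintro ⟨v, σ⟩ ⟨w, ρ⟩ h
    simp only at h
    have h0 := congrFun h 0
    simp only [Fin.cons_zero] at h0
    have hs : σ = ρ := by
      funext j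
      have := congrFun h j.succ
      simpa using this
    rw [Prod.mk.injEq]
    exact ⟨h0, hs⟩
  · intro τ
    refine ⟨(τ 0, τ ∘ Fin.succ), ?_⟩
    funext j
    cases j using Fin.cases <;> simp

/-- Expression of `⟨f, ∂g⟩` as a sum over top tuples. -/
lemma innerW_bdry (f : (Fin (n+1) → V) → ℝ) (g : (Fin (n+2) → V) → ℝ) :
    X.innerW f (X.bdry g)
      = (1 / ((n+1).factorial : ℝ)) * ∑ τ : Fin (n+2) → V,
          χ X τ * (f (τ ∘ Fin.succ) * g τ / (X.degT (τ ∘ Fin.succ) : ℝ)) := by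
  unfold SComplex.innerW
  congr 1
  have hstep : ∀ σ : Fin (n+1) → V, f σ * X.bdry g σ / (X.degT σ : ℝ)
      = ∑ v : V, χ X (Fin.cons v σ) * (f σ * g (Fin.cons v σ) / (X.degT σ : ℝ)) := by
    intro σ
    have hb : X.bdry g σ = ∑ v ∈ nbrF X σ, g (Fin.cons v σ) := by
      unfold SComplex.bdry; exact finsum_nbr X σ _
    rw [hb, Finset.mul_sum, Finset.sum_div, nbrF, Finset.sum_filter]
    apply Finset.sum_congr rfl
    intro v _
    unfold χ
    split_ifs <;> simp
  have h2 : ∑ q : V × (Fin (n+1) → V),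
      χ X (Fin.cons q.1 q.2) * (f q.2 * g (Fin.cons q.1 q.2) / (X.degT q.2 : ℝ))
      = ∑ τ : Fin (n+2) → V,
          χ X τ * (f (τ ∘ Fin.succ) * g τ / (X.degT (τ ∘ Fin.succ) : ℝ)) := by
    apply Fintype.sum_bijective _ cons_bijective
    rintro ⟨v, σ⟩
    show χ X (Fin.cons v σ) * (f σ * g (Fin.cons v σ) / (X.degT σ : ℝ))
      = χ X (Fin.cons v σ) * (f ((Fin.cons v σ) ∘ Fin.succ) * g (Fin.cons v σ)
          / (X.degT ((Fin.cons v σ) ∘ Fin.succ) : ℝ))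
    rw [cons_comp_succ]
  rw [Finset.sum_congr rfl fun σ _ => hstep σ, Finset.sum_comm, ← Fintype.sum_prod_type', h2]

/-- `Σ χ·G² = (n+2)·Σ χ·h·G`. -/
lemma sum_chi_GG_sq {f : (Fin (n+1) → V) → ℝ} (hf : X.IsForm (n+1) f) :
    ∑ τ : Fin (n+2) → V, χ X τ * (GG X f τ) ^ 2
      = ((n : ℝ) + 2) * ∑ τ : Fin (n+2) → V, χ X τ * (hh X f τ * GG X f τ) := by
  have hexp : ∀ τ : Fin (n+2) → V, χ X τ * (GG X f τ) ^ 2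
      = ∑ i : Fin (n+2), χ X τ * GG X f τ * ((-1 : ℝ) ^ (i : ℕ) * hh X f (τ ∘ cyc i)) := by
    intro τ
    rw [← Finset.mul_sum]
    show χ X τ * GG X f τ ^ 2 = χ X τ * GG X f τ * GG X f τ
    ring
  rw [Finset.sum_congr rfl fun τ _ => hexp τ, Finset.sum_comm]
  have hfix : ∀ i : Fin (n+2),
      ∑ τ : Fin (n+2) → V, χ X τ * GG X f τ * ((-1 : ℝ) ^ (i : ℕ) * hh X f (τ ∘ cyc i))
        = ∑ τ : Fin (n+2) → V, χ X τ * (hh X f τ * GG X f τ) := by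
    intro i
    rw [← sum_comp_perm (Fin.cycleRange i)
      (fun τ => χ X τ * GG X f τ * ((-1 : ℝ) ^ (i : ℕ) * hh X f (τ ∘ cyc i)))]
    apply Finset.sum_congr rfl
    intro τ _
    show χ X (τ ∘ Fin.cycleRange i) * GG X f (τ ∘ Fin.cycleRange i)
        * ((-1 : ℝ) ^ (i : ℕ) * hh X f ((τ ∘ Fin.cycleRange i) ∘ cyc i)) = _
    rw [χ_comp_perm, GG_comp_cycleRange X hf, comp_cycleRange_cyc]
    have h1 := neg_one_pow_sq (i : ℕ)
    linear_combination (χ X τ * GG X f τ * hh X f τ) * h1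
  rw [Finset.sum_congr rfl fun i _ => hfix i, Finset.sum_const, Finset.card_univ,
    Fintype.card_fin, nsmul_eq_mul]
  push_cast
  ring

/-- Cauchy–Schwarz bound : `Σ χ·G² ≤ (n+2)²·Σ χ·h²`. -/
lemma sum_chi_GG_sq_le {f : (Fin (n+1) → V) → ℝ} (hf : X.IsForm (n+1) f) :
    ∑ τ : Fin (n+2) → V, χ X τ * (GG X f τ) ^ 2
      ≤ ((n : ℝ) + 2) ^ 2 * ∑ τ : Fin (n+2) → V, χ X τ * (hh X f τ) ^ 2 := by
  have hCS : ∀ τ : Fin (n+2) → V,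
      (GG X f τ) ^ 2 ≤ ((n : ℝ) + 2) * ∑ i : Fin (n+2), (hh X f (τ ∘ cyc i)) ^ 2 := by
    intro τ
    have h1 : (GG X f τ) ^ 2
        ≤ (Finset.univ : Finset (Fin (n+2))).card
            * ∑ i : Fin (n+2), ((-1 : ℝ) ^ (i : ℕ) * hh X f (τ ∘ cyc i)) ^ 2 := by
      exact sq_sum_le_card_mul_sum_sq
    have h2 : ∀ i : Fin (n+2), ((-1 : ℝ) ^ (i : ℕ) * hh X f (τ ∘ cyc i)) ^ 2
        = (hh X f (τ ∘ cyc i)) ^ 2 := by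
      intro i
      rw [mul_pow, neg_one_pow_sq, one_mul]
    rw [Finset.sum_congr rfl fun i _ => h2 i, Finset.card_univ, Fintype.card_fin] at h1
    push_cast at h1
    exact h1
  have hstep : ∀ τ : Fin (n+2) → V, χ X τ * (GG X f τ) ^ 2
      ≤ χ X τ * (((n : ℝ) + 2) * ∑ i : Fin (n+2), (hh X f (τ ∘ cyc i)) ^ 2) :=
    fun τ => mul_le_mul_of_nonneg_left (hCS τ) (χ_nonneg X τ)
  calc ∑ τ : Fin (n+2) → V, χ X τ * (GG X f τ) ^ 2
      ≤ ∑ τ : Fin (n+2) → V,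
          χ X τ * (((n : ℝ) + 2) * ∑ i : Fin (n+2), (hh X f (τ ∘ cyc i)) ^ 2) :=
        Finset.sum_le_sum fun τ _ => hstep τ
    _ = ((n : ℝ) + 2) * ∑ τ : Fin (n+2) → V,
          ∑ i : Fin (n+2), χ X τ * (hh X f (τ ∘ cyc i)) ^ 2 := by
        rw [Finset.mul_sum]
        apply Finset.sum_congr rfl
        intro τ _
        rw [← Finset.mul_sum]
        ring
    _ = ((n : ℝ) + 2) * ∑ i : Fin (n+2), ∑ τ : Fin (n+2) → V,
          χ X τ * (hh X f (τ ∘ cyc i)) ^ 2 := by rw [Finset.sum_comm]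
    _ = ((n : ℝ) + 2) * ∑ i : Fin (n+2), ∑ τ : Fin (n+2) → V,
          χ X τ * (hh X f τ) ^ 2 := by
        congr 1
        apply Finset.sum_congr rfl
        intro i _
        rw [← sum_comp_perm (Fin.cycleRange i)
          (fun τ => χ X τ * (hh X f (τ ∘ cyc i)) ^ 2)]
        apply Finset.sum_congr rfl
        intro τ _
        rw [χ_comp_perm, comp_cycleRange_cyc]
    _ = ((n : ℝ) + 2) ^ 2 * ∑ τ : Fin (n+2) → V, χ X τ * (hh X f τ) ^ 2 := by
        rw [Finset.sum_const, Finset.card_univ, Fintype.card_fin, nsmul_eq_mul]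
        push_cast
        ring

/-- `Σ χ·h² ≤ Σ_σ f(σ)²/deg σ`. -/
lemma sum_chi_hh_sq_le (f : (Fin (n+1) → V) → ℝ) :
    ∑ τ : Fin (n+2) → V, χ X τ * (hh X f τ) ^ 2
      ≤ ∑ σ : Fin (n+1) → V, f σ * f σ / (X.degT σ : ℝ) := by
  have hrw : ∑ τ : Fin (n+2) → V, χ X τ * (hh X f τ) ^ 2
      = ∑ σ : Fin (n+1) → V, ((nbrF X σ).card : ℝ)
          * (f σ / (X.degT σ : ℝ)) ^ 2 := by
    have h1 : ∑ τ : Fin (n+2) → V, χ X τ * (hh X f τ) ^ 2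
        = ∑ q : V × (Fin (n+1) → V),
            χ X (Fin.cons q.1 q.2) * (hh X f (Fin.cons q.1 q.2)) ^ 2 :=
      (Fintype.sum_bijective _ cons_bijective _ _ (fun q => rfl)).symm
    rw [h1, Fintype.sum_prod_type, Finset.sum_comm]
    apply Finset.sum_congr rfl
    intro σ _
    have hterm : ∀ v : V, χ X (Fin.cons v σ) * (hh X f (Fin.cons v σ)) ^ 2
        = χ X (Fin.cons v σ) * (f σ / (X.degT σ : ℝ)) ^ 2 := by
      intro v
      unfold hh
      rw [cons_comp_succ]
    rw [Finset.sum_congr rfl fun v _ => hterm v, ← Finset.sum_mul]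
    congr 1
    unfold χ nbrF
    rw [Finset.sum_boole]
  rw [hrw]
  apply Finset.sum_le_sum
  intro σ _
  rcases Nat.eq_zero_or_pos (nbrF X σ).card with h0 | hpos
  · rw [h0]
    push_cast
    rw [zero_mul]
    have : f σ * f σ / (X.degT σ : ℝ) = (f σ) ^ 2 / (X.degT σ : ℝ) := by ring_nf
    rw [this]
    positivity
  · obtain ⟨v, hv⟩ := Finset.card_pos.1 hpos
    have hcell : X.IsCellT (Fin.cons v σ) := by simpa [nbrF] using hv
    have hinj : Function.Injective σ := (Fin.cons_injective_iff.1 hcell.1).2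
    rw [card_nbrF X σ hinj]
    have hd : 0 < (X.degT σ : ℝ) := by
      rcases Nat.eq_zero_or_pos (X.degT σ) with hz | hp
    -- if degT σ = 0 then card = 0 contradiction
      · rw [← card_nbrF X σ hinj] at hz; omega
      · exact_mod_cast hp
    have hne : (X.degT σ : ℝ) ≠ 0 := hd.ne'
    have heq : (X.degT σ : ℝ) * (f σ / (X.degT σ : ℝ)) ^ 2
        = f σ * f σ / (X.degT σ : ℝ) := by
      field_simp
    exact le_of_eq heq

lemma innerW_pos {f : (Fin (n+1) → V) → ℝ} (hf : X.IsForm (n+1) f)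
    (hdeg : ∀ σ : Fin (n+1) → V, X.IsCellT σ → 0 < X.degT σ) (hf0 : f ≠ 0) :
    0 < X.innerW f f := by
  unfold SComplex.innerW
  have hterm : ∀ σ : Fin (n+1) → V, 0 ≤ f σ * f σ / (X.degT σ : ℝ) := by
    intro σ
    apply div_nonneg (mul_self_nonneg _) (Nat.cast_nonneg _)
  obtain ⟨σ₀, hσ₀⟩ : ∃ σ, f σ ≠ 0 := by
    by_contra h
    push_neg at h
    exact hf0 (funext h)
  have hcell : X.IsCellT σ₀ := by
    by_contra h
    exact hσ₀ (hf.1 σ₀ h)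
  have hpos : 0 < f σ₀ * f σ₀ / (X.degT σ₀ : ℝ) := by
    apply div_pos (mul_self_pos.2 hσ₀)
    exact_mod_cast hdeg σ₀ hcell
  have hsum : 0 < ∑ σ : Fin (n+1) → V, f σ * f σ / (X.degT σ : ℝ) :=
    Finset.sum_pos' (fun σ _ => hterm σ) ⟨σ₀, Finset.mem_univ _, hpos⟩
  have hfac : 0 < (1 / ((n+1).factorial : ℝ)) := by positivity
  exact mul_pos hfac hsum

lemma innerW_bdry_Dst (f : (Fin (n+1) → V) → ℝ) :
    X.innerW f (X.bdry (Dst X f)) = (1 / ((n+1).factorial : ℝ))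
      * ∑ τ : Fin (n+2) → V, χ X τ * (hh X f τ * GG X f τ) := by
  rw [innerW_bdry X f (Dst X f)]
  congr 1
  apply Finset.sum_congr rfl
  intro τ _
  unfold Dst hh χ
  split_ifs with hcell
  · ring
  · simp

lemma innerW_const_smul (f : (Fin (n+1) → V) → ℝ) (a : ℝ) :
    X.innerW f (fun σ => a * f σ) = a * X.innerW f f := by
  unfold SComplex.innerW
  have hterm : ∀ σ : Fin (n+1) → V, f σ * (a * f σ) / (X.degT σ : ℝ)
      = a * (f σ * f σ / (X.degT σ : ℝ)) := fun σ => by ring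
  rw [Finset.sum_congr rfl fun σ _ => hterm σ, ← Finset.mul_sum]
  ring

lemma sum_self_eq (f : (Fin (n+1) → V) → ℝ) :
    ∑ σ : Fin (n+1) → V, f σ * f σ / (X.degT σ : ℝ)
      = ((n+1).factorial : ℝ) * X.innerW f f := by
  unfold SComplex.innerW
  have hfac : ((n+1).factorial : ℝ) ≠ 0 := Nat.cast_ne_zero.2 (Nat.factorial_ne_zero _)
  field_simp

end Inner

end Stmt6Aux
set_option maxHeartbeats 2000000 in
/-- For a finite uniform `d`-dimensional complex (`d = m+2`) and
`0 ≤ p < 1`, every eigenvalue `μ` of the transition operator `A` of the `p`-lazy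
`(d-1)`-walk satisfies `2p-1 ≤ μ ≤ (p(d-1)+1)/d`, and `A` acts as multiplication by
`(p(d-1)+1)/d` on the closed forms `Z^{d-1}`. -/
theorem stmt6 {V : Type*} [Fintype V] (m : ℕ) (X : SComplex V)
    (hdim : ∀ s ∈ X.cells, s.card ≤ m + 3)
    (huni : ∀ s ∈ X.cells, ∃ t ∈ X.cells, t.card = m + 3 ∧ s ⊆ t)
    (htop : ∃ s ∈ X.cells, s.card = m + 3)
    (p : ℝ) (hp₁ : 0 ≤ p) (hp₂ : p < 1) :
    (∀ (μ : ℝ) (f : (Fin (m + 2) → V) → ℝ), X.IsForm (m + 2) f → f ≠ 0 →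
        X.transOp p f = μ • f →
        2 * p - 1 ≤ μ ∧ μ ≤ (p * ((m : ℝ) + 1) + 1) / ((m : ℝ) + 2)) ∧
      ∀ f, X.IsClosedForm m f →
        X.transOp p f = ((p * ((m : ℝ) + 1) + 1) / ((m : ℝ) + 2)) • f := by
  classical
  open Stmt6Aux in
  have hdeg : ∀ σ : Fin (m + 2) → V, X.IsCellT σ → 0 < X.degT σ := by
    intro σ hσ
    obtain ⟨hinj, hmem⟩ := hσ
    obtain ⟨t, ht1, ht2, ht3⟩ := huni _ hmem
    have hcard : (Finset.image σ Finset.univ).card = m + 2 := by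
      rw [Finset.card_image_of_injective _ hinj, Finset.card_univ, Fintype.card_fin]
    unfold SComplex.degT SComplex.degS
    rw [Set.ncard_pos (Set.toFinite _)]
    exact ⟨t, ht1, by omega, ht3⟩
  have hp1 : (0 : ℝ) < 1 - p := by linarith
  have hm2 : (0 : ℝ) < (m : ℝ) + 2 := by positivity
  have hmcast : ((m + 1 : ℕ) : ℝ) + 1 = (m : ℝ) + 2 := by push_cast; ring
  have hF : (0 : ℝ) < ((m + 1 + 1).factorial : ℝ) := by
    exact_mod_cast Nat.factorial_pos _
  constructor
  · -- eigenvalue bounds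
    rintro μ f hf hf0 heig
    set c : ℝ := (μ - p) * ((m : ℝ) + 2) / (1 - p) with hc
    have hnbr : ∀ σ, X.nbrW f σ = c * f σ := by
      intro σ
      have h := congrFun heig σ
      simp only [SComplex.transOp, Pi.smul_apply, smul_eq_mul] at h
      rw [hmcast] at h
      have h2 : ((1 - p) / ((m : ℝ) + 2)) * X.nbrW f σ = (μ - p) * f σ := by linarith
      have h3 : X.nbrW f σ * ((1 - p) / ((m : ℝ) + 2)) * (((m : ℝ) + 2) / (1 - p))
          = (μ - p) * f σ * (((m : ℝ) + 2) / (1 - p)) := by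
        rw [mul_comm (X.nbrW f σ) _, h2]
      have h4 : X.nbrW f σ * ((1 - p) / ((m : ℝ) + 2)) * (((m : ℝ) + 2) / (1 - p))
          = X.nbrW f σ := by
        field_simp
      rw [h4] at h3
      rw [h3, hc]
      ring
    have hB : ∀ σ, X.bdry (Stmt6Aux.Dst X f) σ = (1 - c) * f σ := by
      intro σ
      rw [Stmt6Aux.bdry_Dst X hf hdeg σ, hnbr σ]
      ring
    have hBf : X.bdry (Stmt6Aux.Dst X f) = fun σ => (1 - c) * f σ := funext hB
    have hEq1 : X.innerW f (X.bdry (Stmt6Aux.Dst X f)) = (1 - c) * X.innerW f f := by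
      rw [hBf]
      exact Stmt6Aux.innerW_const_smul X f (1 - c)
    have hEq2 := Stmt6Aux.innerW_bdry_Dst X f
    have hT := Stmt6Aux.sum_chi_GG_sq X hf
    have hTnn : (0 : ℝ) ≤ ∑ τ : Fin (m + 1 + 2) → V,
        Stmt6Aux.χ X τ * (Stmt6Aux.GG X f τ) ^ 2 :=
      Finset.sum_nonneg fun τ _ => mul_nonneg (Stmt6Aux.χ_nonneg X τ) (sq_nonneg _)
    have hTle := Stmt6Aux.sum_chi_GG_sq_le X hf
    have hhle := Stmt6Aux.sum_chi_hh_sq_le X f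
    have hself := Stmt6Aux.sum_self_eq X f
    have hN : 0 < X.innerW f f := Stmt6Aux.innerW_pos X hf hdeg hf0
    -- derive 0 ≤ 1 - c ≤ m + 3
    have hD : ((m + 1 : ℕ) : ℝ) + 2 = (m : ℝ) + 3 := by push_cast; ring
    rw [hD] at hT hTle
    have hShnn : 0 ≤ (1 - c) * X.innerW f f := by
      rw [hEq1.symm, hEq2]
      have hSh : 0 ≤ ∑ τ : Fin (m + 1 + 2) → V,
          Stmt6Aux.χ X τ * (Stmt6Aux.hh X f τ * Stmt6Aux.GG X f τ) := by
        nlinarith [hT, hTnn]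
      positivity
    have hc1 : c ≤ 1 := by nlinarith [hShnn, hN]
    have hSh2 : (1 - c) * X.innerW f f ≤ ((m : ℝ) + 3) * X.innerW f f := by
      have e1 : (1 - c) * X.innerW f f
          = (1 / ((m + 1 + 1).factorial : ℝ)) * ∑ τ : Fin (m + 1 + 2) → V,
              Stmt6Aux.χ X τ * (Stmt6Aux.hh X f τ * Stmt6Aux.GG X f τ) := by
        rw [← hEq1, hEq2]
      have e2 : ((m : ℝ) + 3) * ((1 - c) * X.innerW f f)
          = (1 / ((m + 1 + 1).factorial : ℝ)) * ∑ τ : Fin (m + 1 + 2) → V,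
              Stmt6Aux.χ X τ * (Stmt6Aux.GG X f τ) ^ 2 := by
        rw [hT, e1]
        ring
      have e3 : ∑ τ : Fin (m + 1 + 2) → V, Stmt6Aux.χ X τ * (Stmt6Aux.GG X f τ) ^ 2
          ≤ ((m : ℝ) + 3) ^ 2 * (((m + 1 + 1).factorial : ℝ) * X.innerW f f) := by
        calc ∑ τ : Fin (m + 1 + 2) → V, Stmt6Aux.χ X τ * (Stmt6Aux.GG X f τ) ^ 2
            ≤ ((m : ℝ) + 3) ^ 2 * ∑ τ : Fin (m + 1 + 2) → V,
                Stmt6Aux.χ X τ * (Stmt6Aux.hh X f τ) ^ 2 := hTle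
          _ ≤ ((m : ℝ) + 3) ^ 2 * (((m + 1 + 1).factorial : ℝ) * X.innerW f f) := by
              apply mul_le_mul_of_nonneg_left _ (by positivity)
              rw [← hself]
              exact hhle
      have hm3 : (0 : ℝ) < (m : ℝ) + 3 := by positivity
      have key : ((m : ℝ) + 3) * ((1 - c) * X.innerW f f)
          ≤ ((m : ℝ) + 3) * (((m : ℝ) + 3) * X.innerW f f) := by
        rw [e2]
        calc (1 / ((m + 1 + 1).factorial : ℝ)) * ∑ τ : Fin (m + 1 + 2) → V,
              Stmt6Aux.χ X τ * (Stmt6Aux.GG X f τ) ^ 2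
            ≤ (1 / ((m + 1 + 1).factorial : ℝ))
                * (((m : ℝ) + 3) ^ 2 * (((m + 1 + 1).factorial : ℝ) * X.innerW f f)) :=
              mul_le_mul_of_nonneg_left e3 (by positivity)
          _ = ((m : ℝ) + 3) * (((m : ℝ) + 3) * X.innerW f f) := by
              field_simp
      exact le_of_mul_le_mul_left key hm3
    have hc2 : -((m : ℝ) + 2) ≤ c := by nlinarith [hSh2, hN]
    -- translate to μ
    have hcc : c * (1 - p) = (μ - p) * ((m : ℝ) + 2) := by
      rw [hc]
      field_simp
    have h5 : (μ - p) * ((m : ℝ) + 2) ≤ 1 - p := by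
      have := mul_le_mul_of_nonneg_right hc1 hp1.le
      rw [one_mul] at this
      linarith [hcc, this]
    have h6 : -(((m : ℝ) + 2) * (1 - p)) ≤ (μ - p) * ((m : ℝ) + 2) := by
      have := mul_le_mul_of_nonneg_right hc2 hp1.le
      nlinarith [hcc, this]
    constructor
    · have h7 : 0 ≤ ((m : ℝ) + 2) * (μ - 2 * p + 1) := by nlinarith [h6]
      by_contra hlt
      push_neg at hlt
      have h8 : μ - 2 * p + 1 < 0 := by linarith
      have := mul_neg_of_pos_of_neg hm2 h8
      linarith
    · rw [le_div_iff₀ hm2]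
      nlinarith [h5]
  · -- closed forms
    rintro f ⟨hform, horth⟩
    have h0 : X.innerW f (X.bdry (Stmt6Aux.Dst X f)) = 0 :=
      horth (Stmt6Aux.Dst X f) (Stmt6Aux.Dst_isForm X hform)
    have hEq2 := Stmt6Aux.innerW_bdry_Dst X f
    rw [h0] at hEq2
    have hSh0 : ∑ τ : Fin (m + 1 + 2) → V,
        Stmt6Aux.χ X τ * (Stmt6Aux.hh X f τ * Stmt6Aux.GG X f τ) = 0 := by
      have hF' : (1 / ((m + 1 + 1).factorial : ℝ)) ≠ 0 := by positivity
      field_simp at hEq2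
      simp only [zero_mul, mul_assoc] at hEq2
      linarith [hEq2]
    have hT := Stmt6Aux.sum_chi_GG_sq X hform
    rw [hSh0, mul_zero] at hT
    have hzero : ∀ τ : Fin (m + 1 + 2) → V,
        Stmt6Aux.χ X τ * (Stmt6Aux.GG X f τ) ^ 2 = 0 := by
      have := (Finset.sum_eq_zero_iff_of_nonneg
        (fun τ _ => mul_nonneg (Stmt6Aux.χ_nonneg X τ) (sq_nonneg (Stmt6Aux.GG X f τ)))).1 hT
      exact fun τ => this τ (Finset.mem_univ τ)
    have hDst0 : ∀ τ : Fin (m + 1 + 2) → V, Stmt6Aux.Dst X f τ = 0 := by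
      intro τ
      have h := hzero τ
      unfold Stmt6Aux.Dst
      unfold Stmt6Aux.χ at h ⊢
      split_ifs with hcell
      · rw [if_pos hcell, one_mul] at h
        rw [one_mul]
        exact pow_eq_zero_iff two_ne_zero |>.1 h
      · rw [zero_mul]
    have hnbr : ∀ σ, X.nbrW f σ = f σ := by
      intro σ
      have hb := Stmt6Aux.bdry_Dst X hform hdeg σ
      have hb0 : X.bdry (Stmt6Aux.Dst X f) σ = 0 := by
        unfold SComplex.bdry
        rw [Stmt6Aux.finsum_nbr X σ _]
        exact Finset.sum_eq_zero fun v _ => hDst0 _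
      rw [hb0] at hb
      linarith [hb]
    funext σ
    simp only [SComplex.transOp, Pi.smul_apply, smul_eq_mul]
    rw [hnbr σ, hmcast]
    field_simp
    ring

end
end

section
/- For every r and every real eigenvalue λ of any of the matrices M_{++}^{(r)} = M_{+−}^{(r)} (r ≥ 1), M_{−−}^{(r)} (r ≥ 1), or M_{−+}^{(r)} (r ≥ 0), either λ = 0 or λ > 3/2 − √2. -/
set_option maxHeartbeats 1000000
noncomputable section

/-- The tridiagonal matrix `M₋₋⁽ʳ⁾` (with `M₋₋⁽¹⁾ = (0)`). -/
def Mmm (r : ℕ) : Matrix (Fin r) (Fin r) ℝ := fun i j =>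
  if r = 1 then 0
  else if i = j then (if (i : ℕ) = r - 1 then 2 else 3 / 2)
  else if (j : ℕ) = (i : ℕ) + 1 then -1
  else if (i : ℕ) = (j : ℕ) + 1 then (if (i : ℕ) = r - 1 then -1 else -1 / 2)
  else 0

/-- The tridiagonal matrix `M₊₊⁽ʳ⁾ = M₊₋⁽ʳ⁾`: as `M₋₋⁽ʳ⁾` but with `(1,1)` entry `1/2`
(and `M₊₊⁽¹⁾ = (0)`). -/
def Mpp (r : ℕ) : Matrix (Fin r) (Fin r) ℝ := fun i j =>
  if r = 1 then 0
  else if (i : ℕ) = 0 ∧ (j : ℕ) = 0 then 1 / 2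
  else Mmm r i j

/-- The `(r+1) × (r+1)` matrix `M₋₊⁽ʳ⁾` with first row `(1, -2, 0, …, 0)`. -/
def Mmp (r : ℕ) : Matrix (Fin (r + 1)) (Fin (r + 1)) ℝ := fun i j =>
  if (i : ℕ) = 0 then (if (j : ℕ) = 0 then 1 else if (j : ℕ) = 1 then -2 else 0)
  else if i = j then (if (i : ℕ) = r then 2 else 3 / 2)
  else if (j : ℕ) = (i : ℕ) + 1 then -1
  else if (i : ℕ) = (j : ℕ) + 1 then (if (i : ℕ) = r then -1 else -1 / 2)
  else 0

/-- Easy case: positive sequence with growing ratio γ. -/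
lemma lemC (μ γ : ℝ) (m : ℕ) (a : ℕ → ℝ)
    (hγ0 : 0 < γ) (hγs : γ*γ + 1/2 ≤ μ*γ) (hγe : 1 < γ*(μ+1/2))
    (h0 : 0 < a 0) (h1 : γ * a 0 ≤ a 1)
    (hrec : ∀ k, k+1 ≤ m → a (k+2) = μ*a (k+1) - a k/2)
    (hend : a m = (μ+1/2) * a (m+1)) : False := by
  have key : ∀ k, k ≤ m → 0 < a k ∧ γ * a k ≤ a (k+1) := by
    intro k
    induction k with
    | zero => exact fun _ => ⟨h0, h1⟩
    | succ n ih =>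
      intro h
      obtain ⟨hp, hr⟩ := ih (by omega)
      have hp1 : 0 < a (n+1) := lt_of_lt_of_le (by positivity) hr
      refine ⟨hp1, ?_⟩
      rw [hrec n h]
      nlinarith [mul_le_mul_of_nonneg_right hγs hp1.le, hr, hp, hp1, hγ0]
  obtain ⟨hpm, hrm⟩ := key m le_rfl
  have hp1 : 0 < a (m+1) := lt_of_lt_of_le (by positivity) hrm
  nlinarith [mul_lt_mul_of_pos_right hγe hp1, hrm, hend, hγ0, hpm]

/-- Hard case: decreasing-then-negative invariant. -/
lemma lemAB (μ θ γ : ℝ) (m : ℕ) (a : ℕ → ℝ)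
    (hμ0 : 0 < μ) (hθ0 : 0 < θ) (hθs : μ*θ ≤ θ*θ + 1/2) (hθe : θ*(μ+1/2) < 1)
    (hγ0 : 0 < γ) (hγμ : γ ≤ μ) (hγs : γ*γ + 1/2 ≤ μ*γ) (hγe : 1 < γ*(μ+1/2))
    (h0 : 0 < a 0) (h1 : a 1 ≤ θ * a 0)
    (hrec : ∀ k, k+1 ≤ m → a (k+2) = μ*a (k+1) - a k/2)
    (hend : a m = (μ+1/2) * a (m+1)) : False := by
  have key : ∀ k, k ≤ m →
      (0 < a k ∧ a (k+1) ≤ θ * a k) ∨ (a (k+1) < 0 ∧ a (k+1) ≤ γ * a k) := by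
    intro k
    induction k with
    | zero => exact fun _ => Or.inl ⟨h0, h1⟩
    | succ n ih =>
      intro h
      have hrecn := hrec n h
      rcases ih (by omega) with ⟨hp, hA⟩ | ⟨hneg, hB⟩
      · by_cases hq : 0 < a (n+1)
        · left
          refine ⟨hq, ?_⟩
          rw [hrecn]
          nlinarith [mul_le_mul_of_nonneg_right hθs hq.le, hA, hθ0, hp]
        · right
          push_neg at hq
          constructor
          · rw [hrecn]; nlinarith [hq, hp, hμ0]
          · rw [hrecn]; nlinarith [hq, hp, hγμ, hγ0]
      · right
        have h2 : 2*γ*(a (n+2)) ≤ (2*γ*μ - 1) * a (n+1) := by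
          rw [hrecn]; nlinarith [hB]
        have h3 : (2*γ*μ - 1) * a (n+1) ≤ 2*γ*γ*a (n+1) := by
          have hx := mul_nonneg (by linarith : (0:ℝ) ≤ μ*γ - (γ*γ+1/2))
            (by linarith : (0:ℝ) ≤ -a (n+1))
          nlinarith [hx]
        have h5 : a (n+2) ≤ γ * a (n+1) := by
          by_contra hc
          push_neg at hc
          nlinarith [mul_pos hγ0 (sub_pos.mpr hc)]
        exact ⟨lt_of_le_of_lt h5 (mul_neg_of_pos_of_neg hγ0 hneg), h5⟩
  rcases key m le_rfl with ⟨hp, hA⟩ | ⟨hneg, hB⟩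
  · nlinarith [hθe, hp, hA, hend, hμ0]
  · nlinarith [hγe, hneg, hB, hend, hγ0]

/-- All-zero propagation. -/
lemma all_zero (μ θ : ℝ) (m : ℕ) (a : ℕ → ℝ)
    (h0 : a 0 = 0) (h1 : a 1 = θ * a 0)
    (hrec : ∀ k, k+1 ≤ m → a (k+2) = μ*a (k+1) - a k/2)
    (hbig : ∀ k, m + 2 ≤ k → a k = 0) : ∀ k, a k = 0 := by
  have key : ∀ k, a k = 0 ∧ a (k+1) = 0 := by
    intro k
    induction k with
    | zero => exact ⟨h0, by rw [h1, h0, mul_zero]⟩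
    | succ n ih =>
      refine ⟨ih.2, ?_⟩
      by_cases h : n + 1 ≤ m
      · rw [hrec n h, ih.1, ih.2]; ring
      · exact hbig _ (by omega)
  exact fun k => (key k).1

/-- Master lemma for `Mpp`/`Mmp`-type boundary. -/
lemma master (μ θ : ℝ) (m : ℕ) (a : ℕ → ℝ)
    (hμ2 : 2 ≤ μ*μ) (hμ0 : 0 < μ) (hne : μ ≠ 3/2) (hθ0 : 0 < θ)
    (hs : μ ≤ 3/2 → μ*θ ≤ θ*θ+1/2) (hs' : 3/2 ≤ μ → θ*θ+1/2 ≤ μ*θ)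
    (he : μ < 3/2 → θ*(μ+1/2) < 1) (he' : 3/2 < μ → 1 < θ*(μ+1/2))
    (h0 : 0 < a 0) (h1 : a 1 = θ * a 0)
    (hrec : ∀ k, k+1 ≤ m → a (k+2) = μ*a (k+1) - a k/2)
    (hend : a m = (μ+1/2) * a (m+1)) : False := by
  rcases lt_trichotomy μ (3/2) with h | h | h
  · refine lemAB μ θ (1/μ) m a hμ0 hθ0 (hs h.le) (he h) (by positivity) ?_ ?_ ?_ h0 h1.le hrec hend
    · rw [div_le_iff₀ hμ0]; nlinarith
    · have h4 : (1/μ)*(1/μ) = 1/(μ*μ) := by field_simp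
      rw [h4, div_add' _ _ _ (by positivity), div_le_iff₀ (by positivity)]
      have h5 : μ * (1/μ) = 1 := by field_simp
      rw [h5]
      nlinarith
    · rw [div_mul_eq_mul_div, lt_div_iff₀ hμ0]
      nlinarith
  · exact hne h
  · exact lemC μ θ m a hθ0 (hs' h.le) (he' h) h0 h1.ge hrec hend

lemma tri {n : ℕ} (M : Matrix (Fin n) (Fin n) ℝ) (v : Fin n → ℝ) (i p q : Fin n)
    (c d e : ℝ)
    (hform : ∀ j, M i j = (if j = p then c else 0) + (if j = i then d else 0)
      + (if j = q then e else 0)) :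
    M.mulVec v i = c * v p + d * v i + e * v q := by
  simp only [Matrix.mulVec, dotProduct]
  simp only [hform, add_mul, ite_mul, zero_mul, Finset.sum_add_distrib,
    Finset.sum_ite_eq', Finset.mem_univ, if_true]

section MatrixCases

variable (r : ℕ) (lam : ℝ)

/-- derived facts about μ = 3/2 - lam -/
lemma mu_facts (hle : lam ≤ 3/2 - Real.sqrt 2) :
    2 ≤ (3/2 - lam)*(3/2 - lam) ∧ 0 < 3/2 - lam := by
  have hsq : Real.sqrt 2 ≤ 3/2 - lam := by linarith
  have h2 : Real.sqrt 2 * Real.sqrt 2 = 2 := Real.mul_self_sqrt (by norm_num)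
  have h0 : (0:ℝ) < Real.sqrt 2 := Real.sqrt_pos.mpr (by norm_num)
  exact ⟨by nlinarith, by linarith⟩

/-- Core impossibility for `Mpp`, `r ≥ 2`. -/
lemma mpp_case (hr : 2 ≤ r) (v : Fin r → ℝ) (hv : v ≠ 0)
    (hM : (Mpp r).mulVec v = lam • v) (hne : lam ≠ 0)
    (hle : lam ≤ 3/2 - Real.sqrt 2) : False := by
  obtain ⟨μ, hμdef⟩ : ∃ x : ℝ, x = 3/2 - lam := ⟨_, rfl⟩
  obtain ⟨hμ2, hμ0⟩ := mu_facts lam hle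
  rw [← hμdef] at hμ2 hμ0
  have hμne : μ ≠ 3/2 := fun h => hne (by rw [hμdef] at h; linarith)
  obtain ⟨a, ha⟩ : ∃ f : ℕ → ℝ, f = fun k => if h : k < r then v ⟨k, h⟩ else 0 := ⟨_, rfl⟩
  have hav : ∀ (k : ℕ) (h : k < r), a k = v ⟨k, h⟩ := fun k h => by rw [ha]; exact dif_pos h
  have h0r : 0 < r := by omega
  have h1r : 1 < r := by omega
  -- row 0
  have hrow0 : a 1 = (μ - 1) * a 0 := by
    have hT := tri (Mpp r) v ⟨0, h0r⟩ ⟨0, h0r⟩ ⟨1, h1r⟩ 0 (1/2) (-1) ?_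
    · have hE := congrFun hM ⟨0, h0r⟩
      rw [hT] at hE
      simp only [Pi.smul_apply, smul_eq_mul] at hE
      rw [hav 1 h1r, hav 0 h0r, show μ - 1 = 1/2 - lam by rw [hμdef]; ring]
      linarith
    · intro j
      rcases j with ⟨j, hj⟩
      simp only [Mpp, Mmm, Fin.mk.injEq, Fin.ext_iff, true_and, and_true, false_and, and_false]
      split_ifs <;> try omega
      all_goals try contradiction
      all_goals try simp_all only [false_and, and_false, true_and, and_true]
      all_goals try contradiction
      all_goals norm_num
  -- interior rows
  have hrec : ∀ k, k+1 ≤ r-2 → a (k+2) = μ * a (k+1) - a k / 2 := by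
    intro k hk
    have hk0 : k < r := by omega
    have hk1 : k + 1 < r := by omega
    have hk2 : k + 2 < r := by omega
    have hT := tri (Mpp r) v ⟨k+1, hk1⟩ ⟨k, hk0⟩ ⟨k+2, hk2⟩ (-1/2) (3/2) (-1) ?_
    · have hE := congrFun hM ⟨k+1, hk1⟩
      rw [hT] at hE
      simp only [Pi.smul_apply, smul_eq_mul] at hE
      rw [hav (k+2) hk2, hav (k+1) hk1, hav k hk0, hμdef]
      linarith
    · intro j
      rcases j with ⟨j, hj⟩
      simp only [Mpp, Mmm, Fin.mk.injEq, Fin.ext_iff, true_and, and_true, false_and, and_false]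
      split_ifs <;> try omega
      all_goals try contradiction
      all_goals try simp only [false_and, and_false, true_and, and_true] at *
      all_goals try contradiction
      all_goals norm_num
  -- last row
  have hend : a (r-2) = (μ + 1/2) * a (r-2+1) := by
    have hk1 : r - 1 < r := by omega
    have hk0 : r - 2 < r := by omega
    have hT := tri (Mpp r) v ⟨r-1, hk1⟩ ⟨r-2, hk0⟩ ⟨r-1, hk1⟩ (-1) 2 0 ?_
    · have hE := congrFun hM ⟨r-1, hk1⟩
      rw [hT] at hE
      simp only [Pi.smul_apply, smul_eq_mul] at hE
      rw [show r-2+1 = r-1 by omega, hav (r-2) hk0, hav (r-1) hk1,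
        show μ + 1/2 = 2 - lam by rw [hμdef]; ring]
      linarith
    · intro j
      rcases j with ⟨j, hj⟩
      simp only [Mpp, Mmm, Fin.mk.injEq, Fin.ext_iff, true_and, and_true, false_and, and_false]
      split_ifs <;> try omega
      all_goals try contradiction
      all_goals try simp only [false_and, and_false, true_and, and_true] at *
      all_goals try contradiction
      all_goals norm_num
  -- θ-facts for θ = μ - 1
  have hμ1 : 1 < μ := by nlinarith
  have hθ0 : 0 < μ - 1 := by linarith
  have hs : μ ≤ 3/2 → μ*(μ-1) ≤ (μ-1)*(μ-1)+1/2 := fun h => by nlinarith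
  have hs' : 3/2 ≤ μ → (μ-1)*(μ-1)+1/2 ≤ μ*(μ-1) := fun h => by nlinarith
  have he : μ < 3/2 → (μ-1)*(μ+1/2) < 1 := fun h => by
    nlinarith [mul_pos (show (0:ℝ) < 3/2 - μ by linarith) (show (0:ℝ) < μ + 1 by linarith)]
  have he' : 3/2 < μ → 1 < (μ-1)*(μ+1/2) := fun h => by
    nlinarith [mul_pos (show (0:ℝ) < μ - 3/2 by linarith) (show (0:ℝ) < μ + 1 by linarith)]
  rcases lt_trichotomy (a 0) 0 with h | h | h
  · refine master μ (μ-1) (r-2) (fun k => -(a k)) hμ2 hμ0 hμne hθ0 hs hs' he he'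
      (by simpa using h) (by simpa using congrArg Neg.neg hrow0)
      (fun k hk => by rw [hrec k hk]; ring)
      (by rw [hend]; ring)
  · have hz := all_zero μ (μ-1) (r-2) a h hrow0 hrec
      (fun k hk => by rw [ha]; exact dif_neg (by omega))
    refine hv (funext fun i => ?_)
    have hz' := hz i.1
    rw [hav i.1 i.isLt] at hz'
    simpa using hz'
  · exact master μ (μ-1) (r-2) a hμ2 hμ0 hμne hθ0 hs hs' he he' h hrow0 hrec hend

/-- Core impossibility for `Mmm`, `r ≥ 2`. -/
lemma mmm_case (hr : 2 ≤ r) (v : Fin r → ℝ) (hv : v ≠ 0)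
    (hM : (Mmm r).mulVec v = lam • v)
    (hle : lam ≤ 3/2 - Real.sqrt 2) : False := by
  obtain ⟨μ, hμdef⟩ : ∃ x : ℝ, x = 3/2 - lam := ⟨_, rfl⟩
  obtain ⟨hμ2, hμ0⟩ := mu_facts lam hle
  rw [← hμdef] at hμ2 hμ0
  obtain ⟨a, ha⟩ : ∃ f : ℕ → ℝ, f = fun k => if h : k < r then v ⟨k, h⟩ else 0 := ⟨_, rfl⟩
  have hav : ∀ (k : ℕ) (h : k < r), a k = v ⟨k, h⟩ := fun k h => by rw [ha]; exact dif_pos h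
  have h0r : 0 < r := by omega
  have h1r : 1 < r := by omega
  have hrow0 : a 1 = μ * a 0 := by
    have hT := tri (Mmm r) v ⟨0, h0r⟩ ⟨0, h0r⟩ ⟨1, h1r⟩ 0 (3/2) (-1) ?_
    · have hE := congrFun hM ⟨0, h0r⟩
      rw [hT] at hE
      simp only [Pi.smul_apply, smul_eq_mul] at hE
      rw [hav 1 h1r, hav 0 h0r, hμdef]
      linarith
    · intro j
      rcases j with ⟨j, hj⟩
      simp only [Mmm, Fin.mk.injEq, Fin.ext_iff, true_and, and_true, false_and, and_false]
      split_ifs <;> try omega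
      all_goals try contradiction
      all_goals try simp only [false_and, and_false, true_and, and_true] at *
      all_goals try contradiction
      all_goals norm_num
  have hrec : ∀ k, k+1 ≤ r-2 → a (k+2) = μ * a (k+1) - a k / 2 := by
    intro k hk
    have hk0 : k < r := by omega
    have hk1 : k + 1 < r := by omega
    have hk2 : k + 2 < r := by omega
    have hT := tri (Mmm r) v ⟨k+1, hk1⟩ ⟨k, hk0⟩ ⟨k+2, hk2⟩ (-1/2) (3/2) (-1) ?_
    · have hE := congrFun hM ⟨k+1, hk1⟩
      rw [hT] at hE
      simp only [Pi.smul_apply, smul_eq_mul] at hE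
      rw [hav (k+2) hk2, hav (k+1) hk1, hav k hk0, hμdef]
      linarith
    · intro j
      rcases j with ⟨j, hj⟩
      simp only [Mmm, Fin.mk.injEq, Fin.ext_iff, true_and, and_true, false_and, and_false]
      split_ifs <;> try omega
      all_goals try contradiction
      all_goals try simp only [false_and, and_false, true_and, and_true] at *
      all_goals try contradiction
      all_goals norm_num
  have hend : a (r-2) = (μ + 1/2) * a (r-2+1) := by
    have hk1 : r - 1 < r := by omega
    have hk0 : r - 2 < r := by omega
    have hT := tri (Mmm r) v ⟨r-1, hk1⟩ ⟨r-2, hk0⟩ ⟨r-1, hk1⟩ (-1) 2 0 ?_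
    · have hE := congrFun hM ⟨r-1, hk1⟩
      rw [hT] at hE
      simp only [Pi.smul_apply, smul_eq_mul] at hE
      rw [show r-2+1 = r-1 by omega, hav (r-2) hk0, hav (r-1) hk1,
        show μ + 1/2 = 2 - lam by rw [hμdef]; ring]
      linarith
    · intro j
      rcases j with ⟨j, hj⟩
      simp only [Mmm, Fin.mk.injEq, Fin.ext_iff, true_and, and_true, false_and, and_false]
      split_ifs <;> try omega
      all_goals try contradiction
      all_goals try simp only [false_and, and_false, true_and, and_true] at *
      all_goals try contradiction
      all_goals norm_num
  have hγ0 : 0 < μ/2 := by linarith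
  have hγs : (μ/2)*(μ/2) + 1/2 ≤ μ*(μ/2) := by nlinarith
  have hγe : 1 < (μ/2)*(μ+1/2) := by nlinarith
  rcases lt_trichotomy (a 0) 0 with h | h | h
  · refine lemC μ (μ/2) (r-2) (fun k => -(a k)) hγ0 hγs hγe
      (by simpa using h) (by show μ/2 * -(a 0) ≤ -(a 1); rw [hrow0]; nlinarith [mul_nonneg hμ0.le (neg_nonneg.mpr h.le)])
      (fun k hk => by rw [hrec k hk]; ring)
      (by rw [hend]; ring)
  · have hz := all_zero μ μ (r-2) a h hrow0 hrec (fun k hk => by rw [ha]; exact dif_neg (by omega))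
    refine hv (funext fun i => ?_)
    have hz' := hz i.1
    rw [hav i.1 i.isLt] at hz'
    simpa using hz'
  · exact lemC μ (μ/2) (r-2) a hγ0 hγs hγe h (by rw [hrow0]; nlinarith [mul_nonneg hμ0.le h.le]) hrec hend

/-- Core impossibility for `Mmp`, `r ≥ 1`. -/
lemma mmp_case (hr : 1 ≤ r) (v : Fin (r+1) → ℝ) (hv : v ≠ 0)
    (hM : (Mmp r).mulVec v = lam • v) (hne : lam ≠ 0)
    (hle : lam ≤ 3/2 - Real.sqrt 2) : False := by
  obtain ⟨μ, hμdef⟩ : ∃ x : ℝ, x = 3/2 - lam := ⟨_, rfl⟩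
  obtain ⟨hμ2, hμ0⟩ := mu_facts lam hle
  rw [← hμdef] at hμ2 hμ0
  have hμne : μ ≠ 3/2 := fun h => hne (by rw [hμdef] at h; linarith)
  obtain ⟨a, ha⟩ : ∃ f : ℕ → ℝ, f = fun k => if h : k < r+1 then v ⟨k, h⟩ else 0 := ⟨_, rfl⟩
  have hav : ∀ (k : ℕ) (h : k < r+1), a k = v ⟨k, h⟩ := fun k h => by rw [ha]; exact dif_pos h
  have h0r : 0 < r + 1 := by omega
  have h1r : 1 < r + 1 := by omega
  have hrow0 : a 1 = (2*μ-1)/4 * a 0 := by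
    have hT := tri (Mmp r) v ⟨0, h0r⟩ ⟨0, h0r⟩ ⟨1, h1r⟩ 0 1 (-2) ?_
    · have hE := congrFun hM ⟨0, h0r⟩
      rw [hT] at hE
      simp only [Pi.smul_apply, smul_eq_mul] at hE
      rw [hav 1 h1r, hav 0 h0r, show (2*μ-1)/4 = (1 - lam)/2 by rw [hμdef]; ring]
      linarith
    · intro j
      rcases j with ⟨j, hj⟩
      simp only [Mmp, Fin.mk.injEq, Fin.ext_iff, true_and, and_true, false_and, and_false]
      split_ifs <;> try omega
      all_goals try contradiction
      all_goals try simp_all only [false_and, and_false, true_and, and_true]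
      all_goals try contradiction
      all_goals norm_num
  have hrec : ∀ k, k+1 ≤ r-1 → a (k+2) = μ * a (k+1) - a k / 2 := by
    intro k hk
    have hk0 : k < r + 1 := by omega
    have hk1 : k + 1 < r + 1 := by omega
    have hk2 : k + 2 < r + 1 := by omega
    have hT := tri (Mmp r) v ⟨k+1, hk1⟩ ⟨k, hk0⟩ ⟨k+2, hk2⟩ (-1/2) (3/2) (-1) ?_
    · have hE := congrFun hM ⟨k+1, hk1⟩
      rw [hT] at hE
      simp only [Pi.smul_apply, smul_eq_mul] at hE
      rw [hav (k+2) hk2, hav (k+1) hk1, hav k hk0, hμdef]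
      linarith
    · intro j
      rcases j with ⟨j, hj⟩
      simp only [Mmp, Fin.mk.injEq, Fin.ext_iff, true_and, and_true, false_and, and_false]
      split_ifs <;> try omega
      all_goals try contradiction
      all_goals try simp only [false_and, and_false, true_and, and_true] at *
      all_goals try contradiction
      all_goals norm_num
  have hend : a (r-1) = (μ + 1/2) * a (r-1+1) := by
    have hk1 : r < r + 1 := by omega
    have hk0 : r - 1 < r + 1 := by omega
    have hT := tri (Mmp r) v ⟨r, hk1⟩ ⟨r-1, hk0⟩ ⟨r, hk1⟩ (-1) 2 0 ?_
    · have hE := congrFun hM ⟨r, hk1⟩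
      rw [hT] at hE
      simp only [Pi.smul_apply, smul_eq_mul] at hE
      rw [show r-1+1 = r by omega, hav (r-1) hk0, hav r hk1,
        show μ + 1/2 = 2 - lam by rw [hμdef]; ring]
      linarith
    · intro j
      rcases j with ⟨j, hj⟩
      simp only [Mmp, Fin.mk.injEq, Fin.ext_iff, true_and, and_true, false_and, and_false]
      split_ifs <;> try omega
      all_goals try contradiction
      all_goals try simp only [false_and, and_false, true_and, and_true] at *
      all_goals try contradiction
      all_goals norm_num
  have hμ1 : 1 < μ := by nlinarith
  have hθ0 : 0 < (2*μ-1)/4 := by linarith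
  have hs : μ ≤ 3/2 → μ*((2*μ-1)/4) ≤ ((2*μ-1)/4)*((2*μ-1)/4)+1/2 := fun h => by
    nlinarith [mul_nonneg (show (0:ℝ) ≤ 3/2 - μ by linarith) (show (0:ℝ) ≤ 3/2 + μ by linarith)]
  have hs' : 3/2 ≤ μ → ((2*μ-1)/4)*((2*μ-1)/4)+1/2 ≤ μ*((2*μ-1)/4) := fun h => by
    nlinarith [mul_nonneg (show (0:ℝ) ≤ μ - 3/2 by linarith) (show (0:ℝ) ≤ 3/2 + μ by linarith)]
  have he : μ < 3/2 → ((2*μ-1)/4)*(μ+1/2) < 1 := fun h => by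
    nlinarith [mul_pos (show (0:ℝ) < 3/2 - μ by linarith) (show (0:ℝ) < 3/2 + μ by linarith)]
  have he' : 3/2 < μ → 1 < ((2*μ-1)/4)*(μ+1/2) := fun h => by
    nlinarith [mul_pos (show (0:ℝ) < μ - 3/2 by linarith) (show (0:ℝ) < 3/2 + μ by linarith)]
  rcases lt_trichotomy (a 0) 0 with h | h | h
  · refine master μ ((2*μ-1)/4) (r-1) (fun k => -(a k)) hμ2 hμ0 hμne hθ0 hs hs' he he'
      (by simpa using h) (by simpa using congrArg Neg.neg hrow0)
      (fun k hk => by rw [hrec k hk]; ring)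
      (by rw [hend]; ring)
  · have hz := all_zero μ ((2*μ-1)/4) (r-1) a h hrow0 hrec
      (fun k hk => by rw [ha]; exact dif_neg (by omega))
    refine hv (funext fun i => ?_)
    have hz' := hz i.1
    rw [hav i.1 i.isLt] at hz'
    simpa using hz'
  · exact master μ ((2*μ-1)/4) (r-1) a hμ2 hμ0 hμne hθ0 hs hs' he he' h hrow0 hrec hend

end MatrixCases

/-- Every real eigenvalue of any of the matrices
`M₊₊⁽ʳ⁾ = M₊₋⁽ʳ⁾` (`r ≥ 1`), `M₋₋⁽ʳ⁾` (`r ≥ 1`), `M₋₊⁽ʳ⁾` (`r ≥ 0`) is either `0` or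
greater than `3/2 - √2`. -/
theorem stmt11 :
    (∀ (r : ℕ), 1 ≤ r → ∀ (lam : ℝ) (v : Fin r → ℝ), v ≠ 0 →
      (Mpp r).mulVec v = lam • v → lam = 0 ∨ 3 / 2 - Real.sqrt 2 < lam) ∧
    (∀ (r : ℕ), 1 ≤ r → ∀ (lam : ℝ) (v : Fin r → ℝ), v ≠ 0 →
      (Mmm r).mulVec v = lam • v → lam = 0 ∨ 3 / 2 - Real.sqrt 2 < lam) ∧
    (∀ (r : ℕ) (lam : ℝ) (v : Fin (r + 1) → ℝ), v ≠ 0 →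
      (Mmp r).mulVec v = lam • v → lam = 0 ∨ 3 / 2 - Real.sqrt 2 < lam) := by
  refine ⟨?_, ?_, ?_⟩
  · intro r hr lam v hv hM
    by_cases hne : lam = 0
    · exact Or.inl hne
    right
    by_contra hlt
    push_neg at hlt
    rcases eq_or_lt_of_le hr with h1 | h1
    · -- r = 1 : zero matrix
      apply hne
      have hz : Mpp r = 0 := by
        funext i j
        simp [Mpp, ← h1]
      rw [hz, Matrix.zero_mulVec] at hM
      rcases smul_eq_zero.mp hM.symm with h | h
      · exact h
      · exact absurd h hv
    · exact mpp_case r lam h1 v hv hM hne hlt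
  · intro r hr lam v hv hM
    by_cases hne : lam = 0
    · exact Or.inl hne
    right
    by_contra hlt
    push_neg at hlt
    rcases eq_or_lt_of_le hr with h1 | h1
    · apply hne
      have hz : Mmm r = 0 := by
        funext i j
        simp [Mmm, ← h1]
      rw [hz, Matrix.zero_mulVec] at hM
      rcases smul_eq_zero.mp hM.symm with h | h
      · exact h
      · exact absurd h hv
    · exact mmm_case r lam h1 v hv hM hlt
  · intro r lam v hv hM
    by_cases hne : lam = 0
    · exact Or.inl hne
    right
    by_contra hlt
    push_neg at hlt
    rcases Nat.eq_zero_or_pos r with h1 | h1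
    · -- r = 0 : matrix (1), eigenvalue 1
      subst h1
      have hv0 : v 0 ≠ 0 := by
        intro h
        apply hv
        funext i
        rw [Fin.eq_zero i, h]
        rfl
      have hE := congrFun hM 0
      simp [Matrix.mulVec, dotProduct, Mmp, Fin.sum_univ_one] at hE
      have hlam1 : lam = 1 := by
        rcases mul_eq_zero.mp (show (1 - lam) * v 0 = 0 by linarith [hE]) with h | h
        · linarith
        · exact absurd h hv0
      have hsq : (1:ℝ) ≤ Real.sqrt 2 := by
        rw [show (1:ℝ) = Real.sqrt 1 from Real.sqrt_one.symm]
        exact Real.sqrt_le_sqrt (by norm_num)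
      rw [hlam1] at hlt
      linarith
    · exact mmp_case r lam h1 v hv hM hne hlt
end
end

section
/- Let H be a complex Hilbert space and A a bounded self-adjoint operator on H with 0 ≤ ⟨Af, f⟩ ≤ ⟨f, f⟩ for all f ∈ H. Let 0 < π ≤ 1 and set B = π·A + (1−π)·I. Then for every x ∈ H, Σ_{n=0}^∞ ⟨Bⁿx, x⟩ = (1/π)·Σ_{n=0}^∞ ⟨Aⁿx, x⟩ as an equality in [0, ∞]; in particular, one of these sums is finite if and only if the other is. -/
lemma pow_inner_nonneg' {H : Type*} [NormedAddCommGroup H] [InnerProductSpace ℂ H]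
    [CompleteSpace H] (A : H →L[ℂ] H) (hA : IsSelfAdjoint A)
    (hpos : ∀ f : H, 0 ≤ (inner ℂ (A f) f : ℂ).re) (x : H) (n : ℕ) :
    0 ≤ (inner ℂ ((A ^ n) x) x : ℂ).re := by
  have hsym : ∀ m : ℕ, ∀ u v : H, (inner ℂ ((A ^ m) u) v : ℂ) = inner ℂ u ((A ^ m) v) :=
    fun m => (ContinuousLinearMap.isSelfAdjoint_iff_isSymmetric.mp (hA.pow m))
  rcases Nat.even_or_odd n with ⟨m, hm⟩ | ⟨m, hm⟩
  · subst hm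
    have : (A ^ (m + m)) x = (A ^ m) ((A ^ m) x) := by rw [pow_add]; rfl
    rw [this, hsym m]
    simpa using inner_self_nonneg (𝕜 := ℂ) (x := (A ^ m) x)
  · subst hm
    have : (A ^ (2 * m + 1)) x = (A ^ m) (A ((A ^ m) x)) := by
      rw [show 2 * m + 1 = m + 1 + m by ring, pow_add, pow_add, pow_one]; rfl
    rw [this, hsym m]
    simpa using hpos ((A ^ m) x)

lemma expand_binom' {H : Type*} [NormedAddCommGroup H] [InnerProductSpace ℂ H]
    (A : H →L[ℂ] H) (pp : ℝ) (x : H) (n : ℕ) :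
    (inner ℂ ((((pp : ℂ) • A + (1 - (pp : ℂ)) • (1 : H →L[ℂ] H)) ^ n) x) x : ℂ).re =
      ∑ k ∈ Finset.range (n + 1),
        (n.choose k * pp ^ k * (1 - pp) ^ (n - k)) * (inner ℂ ((A ^ k) x) x : ℂ).re := by
  have hc : Commute ((pp : ℂ) • A) ((1 - (pp : ℂ)) • (1 : H →L[ℂ] H)) :=
    ((Commute.one_right A).smul_left _).smul_right _
  rw [hc.add_pow]
  have hterm : ∀ k, ((pp : ℂ) • A) ^ k * ((1 - (pp : ℂ)) • (1 : H →L[ℂ] H)) ^ (n - k) *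
      (n.choose k : H →L[ℂ] H) =
      ((n.choose k * pp ^ k * (1 - pp) ^ (n - k) : ℝ) : ℂ) • (A ^ k) := by
    intro k
    ext f
    simp only [smul_pow, one_pow, ContinuousLinearMap.mul_apply,
      ContinuousLinearMap.smul_apply, ContinuousLinearMap.natCast_apply,
      ContinuousLinearMap.one_apply, Pi.smul_apply, map_smul, smul_smul]
    rw [map_nsmul, ← Nat.cast_smul_eq_nsmul (R := ℂ), smul_smul]
    push_cast
    ring_nf
  simp_rw [hterm]
  rw [ContinuousLinearMap.sum_apply, sum_inner, Complex.re_sum]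
  exact Finset.sum_congr rfl fun k _ => by
    rw [ContinuousLinearMap.smul_apply, inner_smul_left, Complex.conj_ofReal,
      Complex.re_ofReal_mul]

/-- Let `A` be a bounded self-adjoint operator on a complex Hilbert
space with `0 ≤ ⟨Af, f⟩ ≤ ⟨f, f⟩` for all `f`, let `0 < π ≤ 1` and
`B = π·A + (1-π)·I`. Then `Σₙ ⟨Bⁿx, x⟩ = (1/π)·Σₙ ⟨Aⁿx, x⟩` in `[0,∞]`; in particular
one sum is finite iff the other is. -/
theorem stmt15 {H : Type*} [NormedAddCommGroup H] [InnerProductSpace ℂ H]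
    [CompleteSpace H]
    (A : H →L[ℂ] H) (hA : IsSelfAdjoint A)
    (hbdd : ∀ f : H, 0 ≤ (inner ℂ (A f) f : ℂ).re ∧ (inner ℂ (A f) f : ℂ).re ≤ (inner ℂ f f : ℂ).re)
    (pp : ℝ) (hp₁ : 0 < pp) (hp₂ : pp ≤ 1) (x : H) :
    (∑' nn : ℕ, ENNReal.ofReal
        (inner ℂ ((((pp : ℂ) • A + (1 - (pp : ℂ)) • (1 : H →L[ℂ] H)) ^ nn) x) x : ℂ).re =
      ENNReal.ofReal (1 / pp) *
        ∑' nn : ℕ, ENNReal.ofReal (inner ℂ ((A ^ nn) x) x : ℂ).re) ∧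
    ((∑' nn : ℕ, ENNReal.ofReal
        (inner ℂ ((((pp : ℂ) • A + (1 - (pp : ℂ)) • (1 : H →L[ℂ] H)) ^ nn) x) x : ℂ).re ≠ ⊤) ↔
      (∑' nn : ℕ, ENNReal.ofReal (inner ℂ ((A ^ nn) x) x : ℂ).re ≠ ⊤)) := by
  set a : ℕ → ℝ := fun k => (inner ℂ ((A ^ k) x) x : ℂ).re with ha_def
  have ha : ∀ k, 0 ≤ a k := pow_inner_nonneg' A hA (fun f => (hbdd f).1) x
  set q : ℝ := 1 - pp with hq_def
  have hq0 : 0 ≤ q := by simp [hq_def]; linarith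
  have hq1 : ‖q‖ < 1 := by
    rw [Real.norm_eq_abs, abs_of_nonneg hq0]; simp [hq_def]; linarith
  set c : ℕ → ℕ → ℝ := fun n k => (n.choose k : ℝ) * pp ^ k * q ^ (n - k) with hc_def
  have hc0 : ∀ n k, 0 ≤ c n k := fun n k => by positivity
  set g : ℕ → ℕ → ENNReal := fun n k =>
    if k ≤ n then ENNReal.ofReal (c n k * a k) else 0 with hg_def
  have key : ∑' nn : ℕ, ENNReal.ofReal
      (inner ℂ ((((pp : ℂ) • A + (1 - (pp : ℂ)) • (1 : H →L[ℂ] H)) ^ nn) x) x : ℂ).re =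
      ENNReal.ofReal (1 / pp) * ∑' nn : ℕ, ENNReal.ofReal (a nn) := by
    have step1 : ∀ n, ENNReal.ofReal
        (inner ℂ ((((pp : ℂ) • A + (1 - (pp : ℂ)) • (1 : H →L[ℂ] H)) ^ n) x) x : ℂ).re =
        ∑' k : ℕ, g n k := by
      intro n
      rw [expand_binom' A pp x n]
      rw [tsum_eq_sum (s := Finset.range (n + 1))
        (fun k hk => by
          simp only [Finset.mem_range, not_lt] at hk
          simp only [hg_def, if_neg (by omega : ¬ k ≤ n)])]
      rw [ENNReal.ofReal_sum_of_nonneg (fun k _ => mul_nonneg (hc0 n k) (ha k))]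
      refine Finset.sum_congr rfl fun k hk => ?_
      simp only [Finset.mem_range] at hk
      simp [hg_def, Nat.lt_succ_iff.mp hk, hc_def]
    calc ∑' n, ENNReal.ofReal
          (inner ℂ ((((pp : ℂ) • A + (1 - (pp : ℂ)) • (1 : H →L[ℂ] H)) ^ n) x) x : ℂ).re
        = ∑' n, ∑' k, g n k := by simp_rw [step1]
      _ = ∑' k, ∑' n, g n k := ENNReal.tsum_comm
      _ = ∑' k, ∑' m, g (m + k) k := by
          refine tsum_congr fun k => ?_
          refine (Function.Injective.tsum_eq (add_left_injective k) ?_).symm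
          intro n hn
          have hkn : k ≤ n := by
            by_contra hkn
            simp [Function.mem_support, hg_def, hkn] at hn
          exact ⟨n - k, by simp; omega⟩
      _ = ∑' k, ENNReal.ofReal (1 / pp) * ENNReal.ofReal (a k) := by
          refine tsum_congr fun k => ?_
          have h1 : ∀ m, g (m + k) k =
              ENNReal.ofReal ((((m + k).choose k : ℝ)) * q ^ m) *
                ENNReal.ofReal (pp ^ k * a k) := by
            intro m
            simp only [hg_def, Nat.le_add_left, if_true, hc_def,
              Nat.add_sub_cancel]
            rw [← ENNReal.ofReal_mul (by positivity)]
            ring_nf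
          simp_rw [h1]
          rw [ENNReal.tsum_mul_right]
          have h2 : ∑' m, ENNReal.ofReal (((m + k).choose k : ℝ) * q ^ m) =
              ENNReal.ofReal (1 / pp ^ (k + 1)) := by
            rw [← ENNReal.ofReal_tsum_of_nonneg (fun m => by positivity)
              (summable_choose_mul_geometric_of_norm_lt_one k hq1),
              tsum_choose_mul_geometric_of_norm_lt_one k hq1]
            congr 1
            rw [hq_def]
            ring_nf
          rw [h2, ← ENNReal.ofReal_mul (by positivity),
            ← ENNReal.ofReal_mul (by positivity)]
          congr 1
          have hppk : pp ^ (k + 1) ≠ 0 := by positivity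
          field_simp
          ring
      _ = ENNReal.ofReal (1 / pp) * ∑' k, ENNReal.ofReal (a k) := ENNReal.tsum_mul_left
  refine ⟨key, ?_⟩
  rw [key]
  have hne : ENNReal.ofReal (1 / pp) ≠ 0 := by
    simp [ENNReal.ofReal_eq_zero, not_le]; positivity
  have hnt : ENNReal.ofReal (1 / pp) ≠ ⊤ := ENNReal.ofReal_ne_top
  constructor
  · intro h hs
    exact h (by rw [hs, ENNReal.mul_top hne])
  · intro h
    exact ENNReal.mul_ne_top hnt h
end

section
/- Let d ≥ 2 and let X be a uniform d-dimensional simplicial complex on a countable vertex set whose (d−1)-cells have degrees bounded by some K < ∞. If 0 does not belong to the spectrum of the upper Laplacian Δ⁺ acting on Ω_{L²}^{d−1}(X), then for every oriented (d−1)-cell σ there exists a d-form f ∈ Ω_{L²}^d(X) with ∂_d f = 1_σ. -/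
open scoped BigOperators Classical
open Filter Topology

noncomputable section

open SComplex

namespace Stmt17Aux

open SComplex

variable {V : Type*}

lemma eps_mul {n : ℕ} (π ρ : Equiv.Perm (Fin n)) :
    ((Equiv.Perm.sign (π * ρ) : ℤ) : ℝ)
      = ((Equiv.Perm.sign π : ℤ) : ℝ) * ((Equiv.Perm.sign ρ : ℤ) : ℝ) := by
  rw [map_mul, Units.val_mul, Int.cast_mul]

lemma image_comp_perm {n : ℕ} (σ : Fin n → V) (π : Equiv.Perm (Fin n)) :
    Finset.image (σ ∘ π) Finset.univ = Finset.image σ Finset.univ := by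
  ext a
  simp only [Finset.mem_image, Finset.mem_univ, true_and, Function.comp_apply]
  constructor
  · rintro ⟨i, rfl⟩; exact ⟨π i, rfl⟩
  · rintro ⟨i, rfl⟩; exact ⟨π⁻¹ i, by simp⟩

lemma isCellT_comp_perm (X : SComplex V) {n : ℕ} {σ : Fin n → V} (h : X.IsCellT σ)
    (π : Equiv.Perm (Fin n)) : X.IsCellT (σ ∘ π) :=
  ⟨h.1.comp π.injective, by rw [image_comp_perm]; exact h.2⟩

lemma degT_comp_perm (X : SComplex V) {n : ℕ} (σ : Fin n → V) (π : Equiv.Perm (Fin n)) :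
    X.degT (σ ∘ π) = X.degT σ := by
  unfold SComplex.degT
  rw [image_comp_perm]

lemma image_insertNth {n : ℕ} (j : Fin (n + 1)) (v : V) (σ : Fin n → V) :
    Finset.image (Fin.insertNth j v σ) Finset.univ = insert v (Finset.image σ Finset.univ) := by
  ext a
  simp only [Finset.mem_image, Finset.mem_univ, true_and, Finset.mem_insert]
  constructor
  · rintro ⟨i, rfl⟩
    rcases eq_or_ne i j with rfl | hij
    · left; simp
    · obtain ⟨k, rfl⟩ := Fin.exists_succAbove_eq hij
      right; exact ⟨k, by simp⟩
  · rintro (rfl | ⟨i, rfl⟩)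
    · exact ⟨j, by simp⟩
    · exact ⟨j.succAbove i, by simp⟩

lemma insertNth_eta {n : ℕ} (j : Fin (n + 1)) (τ : Fin (n + 1) → V) :
    Fin.insertNth j (τ j) (τ ∘ j.succAbove) = τ :=
  Fin.insertNth_eq_iff.mpr ⟨rfl, rfl⟩

lemma isCellT_insertNth_iff (X : SComplex V) {n : ℕ} (j : Fin (n + 1)) (v : V) (σ : Fin n → V) :
    X.IsCellT (Fin.insertNth j v σ) ↔
      Function.Injective σ ∧ v ∉ Set.range σ ∧
        insert v (Finset.image σ Finset.univ) ∈ X.cells := by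
  unfold SComplex.IsCellT
  rw [image_insertNth]
  constructor
  · rintro ⟨hinj, hmem⟩
    refine ⟨?_, ?_, hmem⟩
    · intro a b hab
      have h2 : (Fin.insertNth j v σ : Fin (n+1) → V) (j.succAbove a)
          = (Fin.insertNth j v σ : Fin (n+1) → V) (j.succAbove b) := by
        simp only [Fin.insertNth_apply_succAbove]; exact hab
      exact Fin.succAbove_right_injective (hinj h2)
    · rintro ⟨a, ha⟩
      have h2 : (Fin.insertNth j v σ : Fin (n+1) → V) (j.succAbove a)
          = (Fin.insertNth j v σ : Fin (n+1) → V) j := by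
        simp only [Fin.insertNth_apply_succAbove, Fin.insertNth_apply_same]; exact ha
      exact Fin.succAbove_ne j a (hinj h2)
  · rintro ⟨hinj, hv, hmem⟩
    refine ⟨?_, hmem⟩
    intro a b hab
    rcases eq_or_ne a j with rfl | haj
    · rcases eq_or_ne b a with rfl | hba
      · rfl
      · obtain ⟨k, rfl⟩ := Fin.exists_succAbove_eq hba
        simp only [Fin.insertNth_apply_same, Fin.insertNth_apply_succAbove] at hab
        exact absurd ⟨k, hab.symm⟩ hv
    · obtain ⟨k, rfl⟩ := Fin.exists_succAbove_eq haj
      rcases eq_or_ne b j with rfl | hbj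
      · simp only [Fin.insertNth_apply_same, Fin.insertNth_apply_succAbove] at hab
        exact absurd ⟨k, hab⟩ hv
      · obtain ⟨l, rfl⟩ := Fin.exists_succAbove_eq hbj
        simp only [Fin.insertNth_apply_succAbove] at hab
        rw [hinj hab]

lemma isCellT_cons_iff (X : SComplex V) {n : ℕ} (v : V) (σ : Fin n → V) :
    X.IsCellT (Fin.cons v σ) ↔
      Function.Injective σ ∧ v ∉ Set.range σ ∧
        insert v (Finset.image σ Finset.univ) ∈ X.cells := by
  rw [← isCellT_insertNth_iff X 0 v σ, Fin.insertNth_zero']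

lemma isCellT_comp_succAbove (X : SComplex V) {n : ℕ} {τ : Fin (n + 2) → V}
    (h : X.IsCellT τ) (j : Fin (n + 2)) : X.IsCellT (τ ∘ j.succAbove) := by
  refine ⟨h.1.comp Fin.succAbove_right_injective, ?_⟩
  refine X.down_closed h.2 ?_ ?_
  · intro a ha
    simp only [Finset.mem_image, Finset.mem_univ, true_and, Function.comp_apply] at ha ⊢
    obtain ⟨i, rfl⟩ := ha
    exact ⟨j.succAbove i, rfl⟩
  · exact Finset.image_nonempty.mpr Finset.univ_nonempty

lemma bijOn_ext (X : SComplex V) {n : ℕ} (σ : Fin n → V) :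
    Set.BijOn (fun v => insert v (Finset.image σ Finset.univ))
      {v | v ∉ Set.range σ ∧ insert v (Finset.image σ Finset.univ) ∈ X.cells}
      {t | t ∈ X.cells ∧ t.card = (Finset.image σ Finset.univ).card + 1 ∧
        Finset.image σ Finset.univ ⊆ t} := by
  have hmemim : ∀ v : V, v ∈ Finset.image σ Finset.univ ↔ v ∈ Set.range σ := by
    intro v; simp [Finset.mem_image, Set.mem_range, eq_comm]
  refine ⟨?_, ?_, ?_⟩
  · rintro v ⟨hv, hmem⟩
    refine ⟨hmem, ?_, Finset.subset_insert _ _⟩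
    rw [Finset.card_insert_of_notMem (fun hc => hv ((hmemim v).mp hc))]
  · rintro v ⟨hv, _⟩ w ⟨hw, _⟩ heq
    simp only at heq
    have h2 : v ∈ insert w (Finset.image σ Finset.univ) := by
      rw [← heq]; exact Finset.mem_insert_self _ _
    rcases Finset.mem_insert.mp h2 with h | h
    · exact h
    · exact absurd ((hmemim v).mp h) hv
  · rintro t ⟨htc, htcard, htsub⟩
    have hssub : Finset.image σ Finset.univ ⊂ t := by
      refine Finset.ssubset_iff_subset_ne.mpr ⟨htsub, fun hc => ?_⟩
      rw [hc] at htcard; omega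
    obtain ⟨v, hvt, hvnot⟩ := Finset.exists_of_ssubset hssub
    have hveq : insert v (Finset.image σ Finset.univ) = t := by
      apply Finset.eq_of_subset_of_card_le
      · exact Finset.insert_subset hvt htsub
      · rw [Finset.card_insert_of_notMem hvnot]; omega
    exact ⟨v, ⟨fun hc => hvnot ((hmemim v).mpr hc), by rw [hveq]; exact htc⟩, hveq⟩


lemma eps_sq {n : ℕ} (π : Equiv.Perm (Fin n)) :
    ((Equiv.Perm.sign π : ℤ) : ℝ) * ((Equiv.Perm.sign π : ℤ) : ℝ) = 1 := by
  rw [← Int.cast_mul, ← Units.val_mul, Int.units_mul_self, Units.val_one, Int.cast_one]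

lemma sum_perm_eq (k : ℕ) (q : (Fin k → V) → ℝ)
    (hq : ∀ (σ : Fin k → V) (π : Equiv.Perm (Fin k)),
      q (σ ∘ π) = ((Equiv.Perm.sign π : ℤ) : ℝ) * q σ)
    (τ : Fin (k + 1) → V) :
    ∑ π : Equiv.Perm (Fin (k + 1)), ((Equiv.Perm.sign π : ℤ) : ℝ) * q (fun x => τ (π x.succ))
      = (k.factorial : ℝ) * ∑ j : Fin (k + 1), (-1 : ℝ) ^ (j : ℕ) * q (τ ∘ j.succAbove) := by
  rw [← Equiv.sum_comp Equiv.Perm.decomposeFin.symm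
    (fun π => ((Equiv.Perm.sign π : ℤ) : ℝ) * q (fun x => τ (π x.succ)))]
  rw [Fintype.sum_prod_type]
  have key : ∀ (p : Fin (k+1)) (e : Equiv.Perm (Fin k)),
      ((Equiv.Perm.sign (Equiv.Perm.decomposeFin.symm (p, e)) : ℤ) : ℝ) *
        q (fun x => τ (Equiv.Perm.decomposeFin.symm (p, e) x.succ))
      = (-1 : ℝ) ^ (p : ℕ) * q (τ ∘ p.succAbove) := by
    intro p e
    induction p using Fin.cases with
    | zero =>
        have h1 : (fun x : Fin k => τ (Equiv.Perm.decomposeFin.symm ((0 : Fin (k+1)), e) x.succ))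
            = (τ ∘ (0 : Fin (k+1)).succAbove) ∘ e := by
          funext x
          simp [Equiv.Perm.decomposeFin_symm_apply_succ, Fin.succAbove_zero]
        rw [h1, hq, Equiv.Perm.decomposeFin.symm_sign, if_pos rfl]
        simp only [one_mul, Fin.val_zero, pow_zero]
        rw [← mul_assoc, eps_sq, one_mul]
    | succ r =>
        have h1 : (fun x : Fin k => τ (Equiv.Perm.decomposeFin.symm (r.succ, e) x.succ))
            = (τ ∘ r.succ.succAbove) ∘ (r.cycleRange * e) := by
          funext x
          simp only [Equiv.Perm.decomposeFin_symm_apply_succ, Function.comp_apply,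
            Equiv.Perm.coe_mul, ← Fin.succAbove_cycleRange]
        rw [h1, hq, Equiv.Perm.decomposeFin.symm_sign,
          if_neg (Fin.succ_ne_zero r), eps_mul, Fin.sign_cycleRange]
        have h2 : ((((-1 : ℤˣ) ^ (r : ℕ) : ℤˣ) : ℤ) : ℝ) = (-1 : ℝ) ^ (r : ℕ) := by
          push_cast
          rfl
        rw [h2]
        have h3 : ((((-1 : ℤˣ) * Equiv.Perm.sign e : ℤˣ) : ℤ) : ℝ)
            = -((Equiv.Perm.sign e : ℤ) : ℝ) := by push_cast; ring
        rw [h3, Fin.val_succ, pow_succ]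
        linear_combination (-((-1 : ℝ) ^ (r : ℕ) * q (τ ∘ r.succ.succAbove))) * eps_sq e
  calc ∑ p : Fin (k+1), ∑ e : Equiv.Perm (Fin k),
        ((Equiv.Perm.sign (Equiv.Perm.decomposeFin.symm (p, e)) : ℤ) : ℝ) *
          q (fun x => τ (Equiv.Perm.decomposeFin.symm (p, e) x.succ))
      = ∑ p : Fin (k+1), ∑ _e : Equiv.Perm (Fin k), (-1 : ℝ) ^ (p : ℕ) * q (τ ∘ p.succAbove) := by
        refine Finset.sum_congr rfl fun p _ => Finset.sum_congr rfl fun e _ => key p e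
    _ = (k.factorial : ℝ) * ∑ j : Fin (k + 1), (-1 : ℝ) ^ (j : ℕ) * q (τ ∘ j.succAbove) := by
        rw [Finset.mul_sum]
        refine Finset.sum_congr rfl fun p _ => ?_
        rw [Finset.sum_const, Finset.card_univ, Fintype.card_perm, Fintype.card_fin,
          nsmul_eq_mul]

lemma S_antisym (k : ℕ) (q : (Fin k → V) → ℝ)
    (hq : ∀ (σ : Fin k → V) (π : Equiv.Perm (Fin k)),
      q (σ ∘ π) = ((Equiv.Perm.sign π : ℤ) : ℝ) * q σ)
    (τ : Fin (k + 1) → V) (π : Equiv.Perm (Fin (k + 1))) :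
    ∑ j : Fin (k + 1), (-1 : ℝ) ^ (j : ℕ) * q ((τ ∘ π) ∘ j.succAbove)
      = ((Equiv.Perm.sign π : ℤ) : ℝ)
        * ∑ j : Fin (k + 1), (-1 : ℝ) ^ (j : ℕ) * q (τ ∘ j.succAbove) := by
  have h1 := sum_perm_eq k q hq (τ ∘ π)
  have h2 := sum_perm_eq k q hq τ
  have h3 : ∑ ρ : Equiv.Perm (Fin (k+1)),
      ((Equiv.Perm.sign ρ : ℤ) : ℝ) * q (fun x => (τ ∘ π) (ρ x.succ))
      = ((Equiv.Perm.sign π : ℤ) : ℝ) * ∑ σ : Equiv.Perm (Fin (k+1)),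
        ((Equiv.Perm.sign σ : ℤ) : ℝ) * q (fun x => τ (σ x.succ)) := by
    rw [Finset.mul_sum]
    rw [← Equiv.sum_comp (Equiv.mulLeft π)
      (fun σ : Equiv.Perm (Fin (k+1)) => ((Equiv.Perm.sign π : ℤ) : ℝ) *
        (((Equiv.Perm.sign σ : ℤ) : ℝ) * q (fun x => τ (σ x.succ))))]
    refine Finset.sum_congr rfl fun ρ _ => ?_
    simp only [Equiv.coe_mulLeft, Equiv.Perm.coe_mul, Function.comp_apply]
    rw [eps_mul]
    linear_combination (-(((Equiv.Perm.sign ρ : ℤ) : ℝ) * q fun x => τ (π (ρ x.succ)))) * eps_sq π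
  have hfac : (k.factorial : ℝ) ≠ 0 := Nat.cast_ne_zero.mpr (Nat.factorial_ne_zero k)
  apply mul_left_cancel₀ hfac
  rw [← h1, h3, h2]
  ring

lemma finsum_mem_neg {α : Type*} (s : Set α) (f : α → ℝ) :
    (∑ᶠ i ∈ s, -f i) = -∑ᶠ i ∈ s, f i := by
  rw [finsum_mem_def, finsum_mem_def, ← finsum_neg_distrib]
  congr 1
  funext i
  by_cases hi : i ∈ s <;> simp [Set.indicator_of_mem, Set.indicator_of_notMem, hi]

lemma dirac_comp {n : ℕ} (σ₀ : Fin n → V) (hinj : Function.Injective σ₀)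
    (ρ : Equiv.Perm (Fin n)) :
    SComplex.dirac σ₀ (σ₀ ∘ ρ) = ((Equiv.Perm.sign ρ : ℤ) : ℝ) := by
  have huniq : ∀ ρ' : Equiv.Perm (Fin n), σ₀ ∘ ρ = σ₀ ∘ ρ' → ρ = ρ' := by
    intro ρ' h
    ext x
    exact congrArg _ (hinj (congrFun h x))
  unfold SComplex.dirac
  rcases Int.units_eq_one_or (Equiv.Perm.sign ρ) with hs | hs
  · rw [if_pos ⟨ρ, hs, rfl⟩, hs]; norm_num
  · rw [if_neg, if_pos ⟨ρ, hs, rfl⟩, hs]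
    · norm_num
    · rintro ⟨ρ', hs', heq⟩
      rw [huniq ρ' heq] at hs
      rw [hs'] at hs
      norm_num at hs

lemma dirac_eq_zero {n : ℕ} (σ₀ σ : Fin n → V) (h : ∀ ρ : Equiv.Perm (Fin n), σ ≠ σ₀ ∘ ρ) :
    SComplex.dirac σ₀ σ = 0 := by
  unfold SComplex.dirac
  rw [if_neg, if_neg]
  · rintro ⟨ρ, _, heq⟩; exact h ρ heq
  · rintro ⟨ρ, _, heq⟩; exact h ρ heq

lemma dirac_isForm (X : SComplex V) {n : ℕ} (σ₀ : Fin n → V) (h : X.IsCellT σ₀) :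
    X.IsForm n (SComplex.dirac σ₀) := by
  constructor
  · intro σ hσ
    refine dirac_eq_zero σ₀ σ fun ρ heq => hσ ?_
    rw [heq]
    exact isCellT_comp_perm X h ρ
  · intro σ π
    by_cases hex : ∃ ρ : Equiv.Perm (Fin n), σ = σ₀ ∘ ρ
    · obtain ⟨ρ, rfl⟩ := hex
      have hc : (σ₀ ∘ ρ) ∘ π = σ₀ ∘ (ρ * π) := by
        funext x; simp [Equiv.Perm.coe_mul]
      rw [hc, dirac_comp σ₀ h.1, dirac_comp σ₀ h.1, eps_mul]
      ring
    · push_neg at hex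
      rw [dirac_eq_zero σ₀ σ hex, dirac_eq_zero σ₀ (σ ∘ π), mul_zero]
      intro ρ heq
      apply hex (ρ * π⁻¹)
      funext x
      have := congrFun heq (π⁻¹ x)
      simpa [Equiv.Perm.coe_mul] using this

lemma extSet_card (X : SComplex V) {n : ℕ} (σ : Fin n → V) (hinj : Function.Injective σ)
    (j : Fin (n + 1)) :
    Nat.card {v | X.IsCellT (Fin.insertNth j v σ)} = X.degT σ := by
  have hset : {v | X.IsCellT (Fin.insertNth j v σ)}
      = {v | v ∉ Set.range σ ∧ insert v (Finset.image σ Finset.univ) ∈ X.cells} := by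
    ext v
    simp [isCellT_insertNth_iff, hinj]
  rw [hset, Nat.card_congr (Set.BijOn.equiv _ (bijOn_ext X σ)), Nat.card_coe_set_eq]
  rfl

lemma extSet_infinite (X : SComplex V) {n : ℕ} (σ : Fin n → V) (hinj : Function.Injective σ)
    (j : Fin (n + 1)) (h : ¬ ({v | X.IsCellT (Fin.insertNth j v σ)} : Set V).Finite) :
    X.degT σ = 0 := by
  rw [← extSet_card X σ hinj j]
  rw [Nat.card_coe_set_eq, Set.Infinite.ncard h]

lemma consSet_eq {X : SComplex V} {n : ℕ} (σ : Fin n → V) :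
    {v | X.IsCellT (Fin.cons v σ)} = {v | X.IsCellT (Fin.insertNth 0 v σ)} := by
  ext v
  simp only [Set.mem_setOf_eq, ← Fin.insertNth_zero']

end Stmt17Aux

set_option maxHeartbeats 1600000 in
/-- Let `X` be a uniform `d`-complex (`d = m+2 ≥ 2`) on a countable
vertex set with `(d-1)`-degrees bounded by `K`, and let `Δ⁺` be the upper Laplacian on
the Hilbert space of `L²` `(d-1)`-forms (realized by `(H, T)`). If `0` is not in the
spectrum of `Δ⁺`, then for every oriented `(d-1)`-cell `σ₀` there is an `L²` `d`-form
`f` with `∂_d f = 𝟙_{σ₀}`. -/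
theorem stmt17 {V : Type*} [Countable V] (m : ℕ) (X : SComplex V)
    (hdim : ∀ s ∈ X.cells, s.card ≤ m + 3)
    (huni : ∀ s ∈ X.cells, ∃ t ∈ X.cells, t.card = m + 3 ∧ s ⊆ t)
    (htop : ∃ s ∈ X.cells, s.card = m + 3)
    (K : ℕ) (hdeg : ∀ s ∈ X.cells, s.card = m + 2 → X.degS s ≤ K)
    (H : Type*) [NormedAddCommGroup H] [InnerProductSpace ℝ H] [CompleteSpace H]
    (T : H →ₗ[ℝ] ((Fin (m + 2) → V) → ℝ)) (hTinj : Function.Injective T)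
    (hTform : ∀ h, X.IsForm (m + 2) (T h))
    (hTinner : ∀ h₁ h₂ : H,
      HasSum (fun σ : {σ : Fin (m + 2) → V // X.IsCellT σ} =>
          T h₁ σ.1 * T h₂ σ.1 / ((X.degT σ.1 : ℝ) * ((m + 2).factorial : ℝ)))
        (inner ℝ h₁ h₂ : ℝ))
    (hTsurj : ∀ f : (Fin (m + 2) → V) → ℝ, X.IsForm (m + 2) f →
      Summable (fun σ : {σ : Fin (m + 2) → V // X.IsCellT σ} =>
        f σ.1 ^ 2 / ((X.degT σ.1 : ℝ) * ((m + 2).factorial : ℝ))) →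
      ∃ h, T h = f)
    (Δp : H →L[ℝ] H)
    (hΔ : ∀ (h : H) (σ : Fin (m + 2) → V), T (Δp h) σ = T h σ - X.nbrW (T h) σ)
    (hspec : (0 : ℝ) ∉ spectrum ℝ Δp) :
    ∀ σ₀ : Fin (m + 2) → V, X.IsCellT σ₀ →
      ∃ f : (Fin (m + 3) → V) → ℝ, X.IsForm (m + 3) f ∧
        Summable (fun τ : {τ : Fin (m + 3) → V // X.IsCellT τ} =>
          f τ.1 ^ 2 / ((m + 3).factorial : ℝ)) ∧
        ∀ ρ : Fin (m + 2) → V, X.bdry f ρ = dirac σ₀ ρ := by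
  intro σ₀ hσ₀
  classical
  -- `dirac σ₀` is an L² form; pull it back to `h₀ : H`
  have hdform : X.IsForm (m + 2) (SComplex.dirac σ₀) := Stmt17Aux.dirac_isForm X σ₀ hσ₀
  have hdsum : Summable (fun σ : {σ : Fin (m + 2) → V // X.IsCellT σ} =>
      SComplex.dirac σ₀ σ.1 ^ 2 / ((X.degT σ.1 : ℝ) * ((m + 2).factorial : ℝ))) := by
    apply summable_of_finite_support
    have hsub : (Function.support fun σ : {σ : Fin (m + 2) → V // X.IsCellT σ} =>
        SComplex.dirac σ₀ σ.1 ^ 2 / ((X.degT σ.1 : ℝ) * ((m + 2).factorial : ℝ)))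
        ⊆ Set.range (fun ρ : Equiv.Perm (Fin (m + 2)) =>
          (⟨σ₀ ∘ ρ, Stmt17Aux.isCellT_comp_perm X hσ₀ ρ⟩ : {σ : Fin (m + 2) → V // X.IsCellT σ})) := by
      intro σ hσ
      by_contra hc
      apply hσ
      have hz : SComplex.dirac σ₀ σ.1 = 0 := by
        refine Stmt17Aux.dirac_eq_zero σ₀ σ.1 fun ρ heq => ?_
        exact hc ⟨ρ, by apply Subtype.ext; exact heq.symm⟩
      simp [hz]
    exact Set.Finite.subset (Set.finite_range _) hsub
  obtain ⟨h₀, hTh₀⟩ := hTsurj _ hdform hdsum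
  -- invert Δ⁺
  have hunit : IsUnit Δp := by
    by_contra hc
    apply hspec
    rw [spectrum.mem_iff]
    intro hu
    rw [map_zero, zero_sub] at hu
    exact hc (by simpa using hu.neg)
  obtain ⟨u, hu⟩ := hunit
  set hH : H := (↑u⁻¹ : H →L[ℝ] H) h₀ with hhH
  have hΔh : Δp hH = h₀ := by
    rw [hhH, ← hu, ← ContinuousLinearMap.mul_apply, ← Units.val_mul, mul_inv_cancel,
      Units.val_one, ContinuousLinearMap.one_apply]
  set g : (Fin (m + 2) → V) → ℝ := T hH with hgdef
  have hgform : X.IsForm (m + 2) g := hTform hH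
  have hrel : ∀ σ, g σ - X.nbrW g σ = SComplex.dirac σ₀ σ := by
    intro σ
    have h1 := hΔ hH σ
    rw [hΔh, hTh₀] at h1
    exact h1.symm
  -- g vanishes where the degree vanishes
  have hgsummul : Summable (fun σ : {σ : Fin (m + 2) → V // X.IsCellT σ} =>
      g σ.1 * g σ.1 / ((X.degT σ.1 : ℝ) * ((m + 2).factorial : ℝ))) := (hTinner hH hH).summable
  have hg0 : ∀ σ, X.degT σ = 0 → g σ = 0 := by
    set f₂ : (Fin (m + 2) → V) → ℝ := fun σ => if X.degT σ = 0 then 0 else g σ with hf₂def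
    have hform₂ : X.IsForm (m + 2) f₂ := by
      constructor
      · intro σ hσ
        by_cases h : X.degT σ = 0 <;> simp [hf₂def, h, hgform.1 σ hσ]
      · intro σ π
        by_cases h : X.degT σ = 0
        · simp only [hf₂def]
          rw [Stmt17Aux.degT_comp_perm, if_pos h, if_pos h, mul_zero]
        · simp only [hf₂def]
          rw [Stmt17Aux.degT_comp_perm, if_neg h, if_neg h, hgform.2]
    have hsum₂ : Summable (fun σ : {σ : Fin (m + 2) → V // X.IsCellT σ} =>
        f₂ σ.1 ^ 2 / ((X.degT σ.1 : ℝ) * ((m + 2).factorial : ℝ))) := by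
      apply hgsummul.congr
      intro σ
      by_cases h : X.degT σ.1 = 0
      · rw [h, Nat.cast_zero, zero_mul, div_zero, div_zero]
      · simp only [hf₂def, if_neg h]
        rw [sq]
    obtain ⟨h₂, hTh₂⟩ := hTsurj f₂ hform₂ hsum₂
    have hinner0 : (inner ℝ (hH - h₂) (hH - h₂) : ℝ) = 0 := by
      have hs := hTinner (hH - h₂) (hH - h₂)
      have heq : (fun σ : {σ : Fin (m + 2) → V // X.IsCellT σ} =>
          T (hH - h₂) σ.1 * T (hH - h₂) σ.1 / ((X.degT σ.1 : ℝ) * ((m + 2).factorial : ℝ)))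
          = fun _ => (0 : ℝ) := by
        funext σ
        rw [map_sub]
        simp only [Pi.sub_apply]
        rw [hTh₂]
        by_cases h : X.degT σ.1 = 0
        · rw [h, Nat.cast_zero, zero_mul, div_zero]
        · simp only [hf₂def, if_neg h]
          rw [← hgdef, sub_self, zero_mul, zero_div]
      rw [heq] at hs
      simpa using hs.unique hasSum_zero
    have hhh : hH = h₂ := sub_eq_zero.mp (inner_self_eq_zero.mp hinner0)
    intro σ hσ
    have h1 : g σ = f₂ σ := by rw [hgdef, hhh, hTh₂]
    rw [h1]
    simp only [hf₂def]
    rw [if_pos hσ]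
  -- the normalized form q and the coboundary f
  set q : (Fin (m + 2) → V) → ℝ := fun σ => g σ / (X.degT σ : ℝ) with hqdef
  have hqalt : ∀ (σ : Fin (m + 2) → V) (π : Equiv.Perm (Fin (m + 2))),
      q (σ ∘ π) = ((Equiv.Perm.sign π : ℤ) : ℝ) * q σ := by
    intro σ π
    simp only [hqdef]
    rw [hgform.2 σ π, Stmt17Aux.degT_comp_perm, mul_div_assoc]
  set S : (Fin (m + 3) → V) → ℝ :=
    fun τ => ∑ j : Fin (m + 3), (-1 : ℝ) ^ (j : ℕ) * q (τ ∘ j.succAbove) with hSdef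
  set f : (Fin (m + 3) → V) → ℝ := fun τ => if X.IsCellT τ then S τ else 0 with hfdef
  refine ⟨f, ?_, ?_, ?_⟩
  · -- f is a form
    constructor
    · intro τ hτ
      simp only [hfdef]
      rw [if_neg hτ]
    · intro τ π
      by_cases hτ : X.IsCellT τ
      · have hτπ : X.IsCellT (τ ∘ π) := Stmt17Aux.isCellT_comp_perm X hτ π
        simp only [hfdef]
        rw [if_pos hτπ, if_pos hτ]
        simp only [hSdef]
        exact Stmt17Aux.S_antisym (m + 2) q hqalt τ π
      · have hτπ : ¬ X.IsCellT (τ ∘ π) := by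
          intro hc
          apply hτ
          have h1 := Stmt17Aux.isCellT_comp_perm X hc π⁻¹
          have he : ((τ ∘ ⇑π) ∘ ⇑π⁻¹) = τ := by funext x; simp
          rwa [he] at h1
        simp only [hfdef]
        rw [if_neg hτπ, if_neg hτ, mul_zero]
  · -- f is L²
    have hterm : ∀ j : Fin (m + 3), Summable (fun τ : {τ : Fin (m + 3) → V // X.IsCellT τ} =>
        q (τ.1 ∘ j.succAbove) ^ 2) := by
      intro j
      have hsig : Summable (fun x : Σ σ : {σ : Fin (m + 2) → V // X.IsCellT σ},
          {v : V // X.IsCellT (Fin.insertNth j v σ.1)} => q x.1.1 ^ 2) := by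
        rw [summable_sigma_of_nonneg (fun x => sq_nonneg _)]
        constructor
        · intro σ
          by_cases hfin : ({v : V | X.IsCellT (Fin.insertNth j v σ.1)}).Finite
          · have : Finite {v : V // X.IsCellT (Fin.insertNth j v σ.1)} := hfin.to_subtype
            exact Summable.of_finite
          · have hdeg : X.degT σ.1 = 0 := Stmt17Aux.extSet_infinite X σ.1 σ.2.1 j hfin
            have h1 : (fun _ : {v : V // X.IsCellT (Fin.insertNth j v σ.1)}
                => q σ.1 ^ 2) = fun _ => 0 := by
              funext v
              simp only [hqdef]
              rw [hdeg, Nat.cast_zero, div_zero, zero_pow]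
              omega
            rw [h1]
            exact summable_zero
        · apply Summable.of_nonneg_of_le (fun σ => tsum_nonneg fun v => sq_nonneg _)
            ?_ (((hTinner hH hH).summable).mul_left (((m + 2).factorial : ℝ)))
          intro σ
          dsimp only
          by_cases hfin : ({v : V | X.IsCellT (Fin.insertNth j v σ.1)}).Finite
          · rw [tsum_const]
            have hc : Nat.card {v : V // X.IsCellT (Fin.insertNth j v σ.1)} = X.degT σ.1 :=
              Stmt17Aux.extSet_card X σ.1 σ.2.1 j
            rw [hc, nsmul_eq_mul]
            by_cases hdeg : X.degT σ.1 = 0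
            · simp only [hdeg, Nat.cast_zero, zero_mul, div_zero, mul_zero]
              exact le_refl 0
            · apply le_of_eq
              simp only [hqdef]
              have hdegne : ((X.degT σ.1 : ℝ)) ≠ 0 := Nat.cast_ne_zero.mpr hdeg
              have hfacne : (((m + 2).factorial : ℝ)) ≠ 0 :=
                Nat.cast_ne_zero.mpr (Nat.factorial_ne_zero _)
              field_simp
              ring
          · have hdeg : X.degT σ.1 = 0 := Stmt17Aux.extSet_infinite X σ.1 σ.2.1 j hfin
            have h0 : q σ.1 = 0 := by
              simp only [hqdef]
              rw [hdeg, Nat.cast_zero, div_zero]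
            rw [h0]
            have h1 : ∑' _ : {v : V // X.IsCellT (Fin.insertNth j v σ.1)}, (0 : ℝ) ^ 2 = 0 := by
              simp
            rw [h1]
            have h2 : (0 : ℝ) ≤ T hH σ.1 * T hH σ.1
                / ((X.degT σ.1 : ℝ) * (((m + 2).factorial : ℝ))) :=
              div_nonneg (mul_self_nonneg _) (by positivity)
            exact mul_nonneg (by positivity) h2
      have hinjmap : Function.Injective (fun τ : {τ : Fin (m + 3) → V // X.IsCellT τ} =>
          (⟨⟨τ.1 ∘ j.succAbove, Stmt17Aux.isCellT_comp_succAbove X τ.2 j⟩,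
            ⟨τ.1 j, (Stmt17Aux.insertNth_eta j τ.1).symm ▸ τ.2⟩⟩ :
            Σ σ : {σ : Fin (m + 2) → V // X.IsCellT σ},
              {v : V // X.IsCellT (Fin.insertNth j v σ.1)})) := by
        intro a b hab
        have h1 : a.1 ∘ j.succAbove = b.1 ∘ j.succAbove := congrArg (fun x => x.1.1) hab
        have h2 : a.1 j = b.1 j := congrArg (fun x => (x.2 : V)) hab
        apply Subtype.ext
        rw [← Stmt17Aux.insertNth_eta j a.1, ← Stmt17Aux.insertNth_eta j b.1, h1, h2]
      exact (hsig.comp_injective hinjmap).congr fun τ => rfl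
    have hsumS : Summable (fun τ : {τ : Fin (m + 3) → V // X.IsCellT τ} =>
        (((m : ℝ) + 3) / (((m + 3).factorial : ℝ))) * ∑ j : Fin (m + 3), q (τ.1 ∘ j.succAbove) ^ 2) :=
      (summable_sum (fun j _ => hterm j)).mul_left _
    apply Summable.of_nonneg_of_le ?_ ?_ hsumS
    · intro τ
      positivity
    · intro τ
      have hfS : f τ.1 = S τ.1 := by
        simp only [hfdef]
        rw [if_pos τ.2]
      rw [hfS]
      have hcs : S τ.1 ^ 2 ≤ ((m : ℝ) + 3) * ∑ j : Fin (m + 3), q (τ.1 ∘ j.succAbove) ^ 2 := by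
        have h1 := Finset.sum_mul_sq_le_sq_mul_sq Finset.univ
          (fun j : Fin (m + 3) => (-1 : ℝ) ^ (j : ℕ) * q (τ.1 ∘ j.succAbove)) (fun _ => (1 : ℝ))
        simp only [mul_one, one_pow] at h1
        rw [Finset.sum_const, Finset.card_univ, Fintype.card_fin, nsmul_eq_mul, mul_one] at h1
        have h2 : ∀ j : Fin (m + 3),
            ((-1 : ℝ) ^ (j : ℕ) * q (τ.1 ∘ j.succAbove)) ^ 2 = q (τ.1 ∘ j.succAbove) ^ 2 := by
          intro j
          rw [mul_pow, ← pow_mul, mul_comm (j : ℕ) 2, pow_mul]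
          norm_num
        calc S τ.1 ^ 2
            = (∑ j : Fin (m + 3), (-1 : ℝ) ^ (j : ℕ) * q (τ.1 ∘ j.succAbove)) ^ 2 := by
              simp only [hSdef]
          _ ≤ (∑ j : Fin (m + 3), ((-1 : ℝ) ^ (j : ℕ) * q (τ.1 ∘ j.succAbove)) ^ 2)
              * ((m + 3 : ℕ) : ℝ) := h1
          _ = ((m : ℝ) + 3) * ∑ j : Fin (m + 3), q (τ.1 ∘ j.succAbove) ^ 2 := by
              rw [Finset.sum_congr rfl (fun j _ => h2 j)]
              push_cast
              ring
      calc S τ.1 ^ 2 / (((m + 3).factorial : ℝ))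
          ≤ (((m : ℝ) + 3) * ∑ j : Fin (m + 3), q (τ.1 ∘ j.succAbove) ^ 2)
            / (((m + 3).factorial : ℝ)) := by
            have hfacpos : (0 : ℝ) < ((m + 3).factorial : ℝ) := by positivity
            exact (div_le_div_iff_of_pos_right hfacpos).mpr hcs
          _ = (((m : ℝ) + 3) / (((m + 3).factorial : ℝ)))
              * ∑ j : Fin (m + 3), q (τ.1 ∘ j.succAbove) ^ 2 := by
            ring
  · -- boundary identity
    intro ρ
    show (∑ᶠ v ∈ {v : V | X.IsCellT (Fin.cons v ρ)}, f (Fin.cons v ρ)) = SComplex.dirac σ₀ ρ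
    by_cases hρ : X.IsCellT ρ
    case neg =>
      have hs : {v : V | X.IsCellT (Fin.cons v ρ)} = ∅ := by
        ext v
        simp only [Set.mem_setOf_eq, Set.mem_empty_iff_false, iff_false]
        intro hv
        rcases (Stmt17Aux.isCellT_cons_iff X v ρ).mp hv with ⟨hinj, hvr, hmem⟩
        exact hρ ⟨hinj, X.down_closed hmem (Finset.subset_insert _ _)
          (Finset.image_nonempty.mpr Finset.univ_nonempty)⟩
      rw [hs, finsum_mem_empty]
      refine (Stmt17Aux.dirac_eq_zero σ₀ ρ fun π heq => hρ ?_).symm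
      rw [heq]
      exact Stmt17Aux.isCellT_comp_perm X hσ₀ π
    case pos =>
      have hscons : ∀ v : V, X.IsCellT (Fin.cons v ρ) →
          f (Fin.cons v ρ) = q ρ - ∑ i : Fin (m + 2), (-1 : ℝ) ^ (i : ℕ) *
            g (Fin.cons v (ρ ∘ i.succAbove)) / (X.degT (Fin.cons v (ρ ∘ i.succAbove)) : ℝ) := by
        intro v hv
        simp only [hfdef]
        rw [if_pos hv]
        simp only [hSdef]
        rw [Fin.sum_univ_succ]
        have h0 : (Fin.cons v ρ : Fin (m + 3) → V) ∘ (0 : Fin (m + 3)).succAbove = ρ := by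
          funext x
          simp [Fin.succAbove_zero]
        have hi : ∀ i : Fin (m + 2), (Fin.cons v ρ : Fin (m + 3) → V) ∘ (i.succ).succAbove
            = Fin.cons v (ρ ∘ i.succAbove) := by
          intro i
          funext x
          induction x using Fin.cases with
          | zero => simp [Fin.succ_succAbove_zero]
          | succ k => simp [Fin.succ_succAbove_succ]
        rw [h0]
        simp only [Fin.val_zero, pow_zero, one_mul]
        have hsum : ∑ i : Fin (m + 2), (-1 : ℝ) ^ ((i.succ : Fin (m + 3)) : ℕ)
              * q ((Fin.cons v ρ : Fin (m + 3) → V) ∘ (i.succ).succAbove)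
            = - ∑ i : Fin (m + 2), (-1 : ℝ) ^ (i : ℕ) *
              g (Fin.cons v (ρ ∘ i.succAbove)) / (X.degT (Fin.cons v (ρ ∘ i.succAbove)) : ℝ) := by
          rw [← Finset.sum_neg_distrib]
          refine Finset.sum_congr rfl fun i _ => ?_
          rw [hi i, Fin.val_succ, pow_succ]
          simp only [hqdef]
          ring
        rw [hsum, ← sub_eq_add_neg]
      set sV := {v : V | X.IsCellT (Fin.cons v ρ)} with hsVdef
      set stuff : V → ℝ := fun v => ∑ i : Fin (m + 2), (-1 : ℝ) ^ (i : ℕ) *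
        g (Fin.cons v (ρ ∘ i.succAbove)) / (X.degT (Fin.cons v (ρ ∘ i.succAbove)) : ℝ) with hstuffdef
      have hnbr : X.nbrW g ρ = ∑ᶠ v ∈ sV, stuff v := rfl
      by_cases hfin : sV.Finite
      case pos =>
        have hcard : hfin.toFinset.card = X.degT ρ := by
          rw [← Set.ncard_eq_toFinset_card sV hfin, ← Nat.card_coe_set_eq]
          rw [hsVdef, Stmt17Aux.consSet_eq ρ]
          exact Stmt17Aux.extSet_card X ρ hρ.1 0
        have hbd : (∑ᶠ v ∈ sV, f (Fin.cons v ρ)) = ∑ v ∈ hfin.toFinset, (q ρ - stuff v) := by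
          have hb1 : (∑ᶠ v ∈ sV, f (Fin.cons v ρ)) = ∑ᶠ v ∈ sV, (q ρ - stuff v) :=
            finsum_mem_congr rfl (fun v hv => hscons v hv)
          rw [hb1]
          exact finsum_mem_eq_finite_toFinset_sum _ hfin
        rw [hbd, Finset.sum_sub_distrib, Finset.sum_const, nsmul_eq_mul]
        have hqcard : (hfin.toFinset.card : ℝ) * q ρ = g ρ := by
          have hcc : (hfin.toFinset.card : ℝ) = (X.degT ρ : ℝ) := by exact_mod_cast hcard
          rw [hcc]
          by_cases hdeg : X.degT ρ = 0
          · rw [hdeg, Nat.cast_zero, zero_mul, hg0 ρ hdeg]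
          · simp only [hqdef]
            field_simp
        rw [hqcard]
        have hst : ∑ v ∈ hfin.toFinset, stuff v = X.nbrW g ρ := by
          rw [hnbr]
          exact (finsum_mem_eq_finite_toFinset_sum _ hfin).symm
        rw [hst]
        exact hrel ρ
      case neg =>
        have hdeg : X.degT ρ = 0 := by
          apply Stmt17Aux.extSet_infinite X ρ hρ.1 0
          rwa [← Stmt17Aux.consSet_eq ρ]
        have hgρ : g ρ = 0 := hg0 ρ hdeg
        have hqρ : q ρ = 0 := by
          simp only [hqdef]
          rw [hgρ, zero_div]
        have h1 : (∑ᶠ v ∈ sV, f (Fin.cons v ρ)) = ∑ᶠ v ∈ sV, -stuff v :=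
          finsum_mem_congr rfl (fun v hv => by rw [hscons v hv, hqρ, zero_sub])
        rw [h1, Stmt17Aux.finsum_mem_neg, ← hnbr, ← hrel ρ, hgρ, zero_sub]


end
end

section
/- Let U, V, W be finite-dimensional real inner product spaces and let ∂₂ : W → V and ∂₁ : V → U be linear maps with ∂₁ ∘ ∂₂ = 0, and set Δ = ∂₂ ∘ ∂₂* + ∂₁* ∘ ∂₁. Then the restriction to ker Δ of the quotient map ker ∂₁ → ker ∂₁ / range ∂₂ is a linear isomorphism; in particular ker Δ is isomorphic as a real vector space to the homology ker ∂₁ / range ∂₂ (the discrete Hodge theorem). -/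
/-- **discrete Hodge theorem.** For linear maps `∂₂ : W → V`,
`∂₁ : V → U` between finite-dimensional real inner product spaces with `∂₁ ∘ ∂₂ = 0`
and `Δ = ∂₂∂₂* + ∂₁*∂₁`: the restriction to `ker Δ` of the quotient map
`ker ∂₁ → ker ∂₁ / range ∂₂` is a linear isomorphism; in particular `ker Δ` is
isomorphic to the homology `ker ∂₁ / range ∂₂`. -/
theorem stmt19 {U V W : Type*}
    [NormedAddCommGroup U] [InnerProductSpace ℝ U] [FiniteDimensional ℝ U]
    [NormedAddCommGroup V] [InnerProductSpace ℝ V] [FiniteDimensional ℝ V]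
    [NormedAddCommGroup W] [InnerProductSpace ℝ W] [FiniteDimensional ℝ W]
    (d2 : W →ₗ[ℝ] V) (d1 : V →ₗ[ℝ] U) (h : d1 ∘ₗ d2 = 0) :
    (∃ hle : LinearMap.ker (d2 ∘ₗ LinearMap.adjoint d2 + LinearMap.adjoint d1 ∘ₗ d1) ≤
        LinearMap.ker d1,
      Function.Bijective
        ((Submodule.comap (LinearMap.ker d1).subtype (LinearMap.range d2)).mkQ.comp
          (Submodule.inclusion hle))) ∧
      Nonempty
        (↥(LinearMap.ker (d2 ∘ₗ LinearMap.adjoint d2 + LinearMap.adjoint d1 ∘ₗ d1)) ≃ₗ[ℝ]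
          (↥(LinearMap.ker d1) ⧸
            Submodule.comap (LinearMap.ker d1).subtype (LinearMap.range d2))) := by
  set Δ := d2 ∘ₗ LinearMap.adjoint d2 + LinearMap.adjoint d1 ∘ₗ d1 with hΔ
  -- characterization of ker Δ
  have key : ∀ x : V, x ∈ LinearMap.ker Δ ↔ LinearMap.adjoint d2 x = 0 ∧ d1 x = 0 := by
    intro x
    constructor
    · intro hx
      have hx0 : Δ x = 0 := hx
      have hinner : inner ℝ (Δ x) x = (0 : ℝ) := by rw [hx0]; simp
      have hsum : (inner ℝ (LinearMap.adjoint d2 x) (LinearMap.adjoint d2 x) : ℝ)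
          + (inner ℝ (d1 x) (d1 x) : ℝ) = (0 : ℝ) := by
        have heq : inner ℝ (Δ x) x
            = (inner ℝ (d2 (LinearMap.adjoint d2 x)) x : ℝ)
              + (inner ℝ (LinearMap.adjoint d1 (d1 x)) x : ℝ) := by
          simp [hΔ, LinearMap.add_apply, LinearMap.comp_apply, inner_add_left]
        rw [heq] at hinner
        rw [← hinner]
        congr 1
        · rw [← LinearMap.adjoint_inner_right d2]
        · rw [LinearMap.adjoint_inner_left]
      have h1 : (0:ℝ) ≤ inner ℝ (LinearMap.adjoint d2 x) (LinearMap.adjoint d2 x) :=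
        real_inner_self_nonneg
      have h2 : (0:ℝ) ≤ inner ℝ (d1 x) (d1 x) := real_inner_self_nonneg
      constructor
      · have : (inner ℝ (LinearMap.adjoint d2 x) (LinearMap.adjoint d2 x) : ℝ) = 0 := by linarith
        exact inner_self_eq_zero.mp this
      · have : (inner ℝ (d1 x) (d1 x) : ℝ) = 0 := by linarith
        exact inner_self_eq_zero.mp this
    · rintro ⟨h1, h2⟩
      show Δ x = 0
      simp [hΔ, LinearMap.add_apply, LinearMap.comp_apply, h1, h2]
  -- ker adjoint d2 vs orthogonal of range
  have horth : ∀ x : V, LinearMap.adjoint d2 x = 0 ↔ x ∈ (LinearMap.range d2)ᗮ := by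
    intro x
    constructor
    · intro hx
      rintro v ⟨w, rfl⟩
      rw [← LinearMap.adjoint_inner_right d2, hx, inner_zero_right]
    · intro hx
      have := hx (d2 (LinearMap.adjoint d2 x)) ⟨_, rfl⟩
      rw [← LinearMap.adjoint_inner_right d2] at this
      exact inner_self_eq_zero.mp this
  have hrange : LinearMap.range d2 ≤ LinearMap.ker d1 := by
    rintro v ⟨w, rfl⟩
    show d1 (d2 w) = 0
    have := congrArg (fun f => f w) h
    simpa using this
  have hle : LinearMap.ker Δ ≤ LinearMap.ker d1 := fun x hx => ((key x).mp hx).2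
  have hbij : Function.Bijective
      ((Submodule.comap (LinearMap.ker d1).subtype (LinearMap.range d2)).mkQ.comp
        (Submodule.inclusion hle)) := by
    constructor
    · intro x y hxy
      have hmem : (Submodule.inclusion hle x - Submodule.inclusion hle y : LinearMap.ker d1) ∈
          Submodule.comap (LinearMap.ker d1).subtype (LinearMap.range d2) := by
        rw [← Submodule.Quotient.eq]
        exact hxy
      have hmem' : (x : V) - (y : V) ∈ LinearMap.range d2 := hmem
      have hker : (x : V) - (y : V) ∈ LinearMap.ker Δ := sub_mem x.2 y.2
      have hperp : (x : V) - (y : V) ∈ (LinearMap.range d2)ᗮ :=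
        (horth _).mp ((key _).mp hker).1
      have hsz : (x : V) - (y : V) = 0 := by
        have := hperp ((x : V) - (y : V)) hmem'
        exact inner_self_eq_zero.mp this
      ext
      exact sub_eq_zero.mp hsz
    · intro q
      obtain ⟨⟨y, hy⟩, rfl⟩ := Submodule.mkQ_surjective _ q
      obtain ⟨p, hp, z, hz, hyz⟩ := (LinearMap.range d2).exists_add_mem_mem_orthogonal y
      have hz2 : LinearMap.adjoint d2 z = 0 := (horth z).mpr hz
      have hz1 : d1 z = 0 := by
        have hpk : d1 p = 0 := hrange hp
        have : d1 y = d1 p + d1 z := by rw [hyz]; simp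
        rw [hy, hpk, zero_add] at this
        exact this.symm
      have hzker : z ∈ LinearMap.ker Δ := (key z).mpr ⟨hz2, hz1⟩
      refine ⟨⟨z, hzker⟩, ?_⟩
      show Submodule.Quotient.mk _ = Submodule.Quotient.mk _
      rw [Submodule.Quotient.eq]
      show (z : V) - y ∈ LinearMap.range d2
      have : (z : V) - y = -p := by rw [hyz]; abel
      rw [this]
      exact neg_mem hp
  exact ⟨⟨hle, hbij⟩, ⟨LinearEquiv.ofBijective _ hbij⟩⟩
end
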